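/- arXiv:1411.5652 — 15 statements merged into one kernel-verified Lean document; each statement's English description precedes it below -/
import Mathlib

section
/- Let a, b, c, d, f, g, h : ℝ → ℝ be smooth with f' ≠ 0 and g ≠ 0 everywhere, and let A, B, C, D : ℝ → ℝ be differentiable functions satisfying, for all x: A(f(x)) = a/(f'·g²), B(f(x)) = (b·g − 3a·h)/(f'·g²), C(f(x)) = (3a·h² − 2b·g·h + c·g² + g'·g)/(f'·g²), D(f(x)) = (−a·h³ + b·g·h² − c·g²·h + d·g³ + h'·g² − g'·g·h)/(f'·g²) (right-hand sides evaluated at x). Then the relative invariant s₃ = a'·b − b'·a + a·b·c − (2/9)·b³ − 3a²·d satisfies, for all x, (A'·B − B'·A + A·B·C − (2/9)·B³ − 3A²·D)(f(x)) = s₃(x)/(f'(x)³·g(x)³). In particular, the condition s₃ = 0 is invariant under linear point transformations. -/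
/-- `s₃ = a'b − b'a + abc − (2/9)b³ − 3a²d` is a relative invariant
(of weight `(f'·g)³`) of Abel equations of the first kind under linear point
transformations; in particular the condition `s₃ = 0` is invariant. -/
theorem abel_s3_relative_invariant
    (a b c d f g h A B C D : ℝ → ℝ)
    (ha : ContDiff ℝ (⊤ : ℕ∞) a) (hb : ContDiff ℝ (⊤ : ℕ∞) b)
    (hc : ContDiff ℝ (⊤ : ℕ∞) c) (hd : ContDiff ℝ (⊤ : ℕ∞) d)
    (hf : ContDiff ℝ (⊤ : ℕ∞) f) (hg : ContDiff ℝ (⊤ : ℕ∞) g)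
    (hh : ContDiff ℝ (⊤ : ℕ∞) h)
    (hf' : ∀ x, deriv f x ≠ 0) (hg0 : ∀ x, g x ≠ 0)
    (hA : Differentiable ℝ A) (hB : Differentiable ℝ B)
    (hC : Differentiable ℝ C) (hD : Differentiable ℝ D)
    (hAe : ∀ x, A (f x) = a x / (deriv f x * g x ^ 2))
    (hBe : ∀ x, B (f x) = (b x * g x - 3 * a x * h x) / (deriv f x * g x ^ 2))
    (hCe : ∀ x, C (f x) = (3 * a x * h x ^ 2 - 2 * b x * g x * h x
      + c x * g x ^ 2 + deriv g x * g x) / (deriv f x * g x ^ 2))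
    (hDe : ∀ x, D (f x) = (-(a x) * h x ^ 3 + b x * g x * h x ^ 2
      - c x * g x ^ 2 * h x + d x * g x ^ 3 + deriv h x * g x ^ 2
      - deriv g x * g x * h x) / (deriv f x * g x ^ 2)) :
    (∀ x, deriv A (f x) * B (f x) - deriv B (f x) * A (f x)
        + A (f x) * B (f x) * C (f x) - (2/9) * B (f x) ^ 3
        - 3 * A (f x) ^ 2 * D (f x)
      = (deriv a x * b x - deriv b x * a x + a x * b x * c x
          - (2/9) * b x ^ 3 - 3 * a x ^ 2 * d x)
          / (deriv f x ^ 3 * g x ^ 3))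
    ∧ (∀ x, (deriv a x * b x - deriv b x * a x + a x * b x * c x
          - (2/9) * b x ^ 3 - 3 * a x ^ 2 * d x = 0)
        ↔ (deriv A (f x) * B (f x) - deriv B (f x) * A (f x)
          + A (f x) * B (f x) * C (f x) - (2/9) * B (f x) ^ 3
          - 3 * A (f x) ^ 2 * D (f x) = 0)) := by
  have had : Differentiable ℝ a := ha.differentiable (by simp)
  have hbd : Differentiable ℝ b := hb.differentiable (by simp)
  have hfd : Differentiable ℝ f := hf.differentiable (by simp)
  have hgd : Differentiable ℝ g := hg.differentiable (by simp)
  have hhd : Differentiable ℝ h := hh.differentiable (by simp)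
  have hf'd : Differentiable ℝ (deriv f) :=
    ((contDiff_infty_iff_deriv.mp hf).2).differentiable (by simp)
  have main : ∀ x, deriv A (f x) * B (f x) - deriv B (f x) * A (f x)
        + A (f x) * B (f x) * C (f x) - (2/9) * B (f x) ^ 3
        - 3 * A (f x) ^ 2 * D (f x)
      = (deriv a x * b x - deriv b x * a x + a x * b x * c x
          - (2/9) * b x ^ 3 - 3 * a x ^ 2 * d x)
          / (deriv f x ^ 3 * g x ^ 3) := by
    intro x
    have hMne : deriv f x * g x ^ 2 ≠ 0 :=
      mul_ne_zero (hf' x) (pow_ne_zero 2 (hg0 x))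
    have hM : HasDerivAt (fun y => deriv f y * g y ^ 2)
        (deriv (deriv f) x * g x ^ 2 + deriv f x * ((2 : ℕ) * g x ^ 1 * deriv g x)) x :=
      (hf'd x).hasDerivAt.mul ((hgd x).hasDerivAt.pow 2)
    -- derivative of A ∘ f
    have hP : HasDerivAt (fun y => a y / (deriv f y * g y ^ 2))
        ((deriv a x * (deriv f x * g x ^ 2)
          - a x * (deriv (deriv f) x * g x ^ 2 + deriv f x * ((2 : ℕ) * g x ^ 1 * deriv g x)))
          / (deriv f x * g x ^ 2) ^ 2) x :=
      (had x).hasDerivAt.div hM hMne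
    have eA : deriv A (f x) * deriv f x
        = (deriv a x * (deriv f x * g x ^ 2)
          - a x * (deriv (deriv f) x * g x ^ 2 + deriv f x * ((2 : ℕ) * g x ^ 1 * deriv g x)))
          / (deriv f x * g x ^ 2) ^ 2 := by
      have h1 : deriv (fun y => A (f y)) x = deriv A (f x) * deriv f x :=
        deriv_comp x (hA (f x)) (hfd x)
      rw [← h1, show (fun y => A (f y)) = fun y => a y / (deriv f y * g y ^ 2)
        from funext hAe]
      exact hP.deriv
    -- derivative of B ∘ f
    have hN : HasDerivAt (fun y => b y * g y - 3 * a y * h y)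
        ((deriv b x * g x + b x * deriv g x)
          - (3 * deriv a x * h x + 3 * a x * deriv h x)) x := by
      have : HasDerivAt (fun y => 3 * a y * h y)
          (3 * deriv a x * h x + 3 * a x * deriv h x) x := by
        have h3a : HasDerivAt (fun y => 3 * a y) (3 * deriv a x) x :=
          (had x).hasDerivAt.const_mul 3
        have h2 : HasDerivAt (fun y => 3 * a y * h y) (3 * deriv a x * h x + 3 * a x * deriv h x) x := by
          have := h3a.mul (hhd x).hasDerivAt; exact this
        simpa [mul_assoc] using h2
      exact ((hbd x).hasDerivAt.mul (hgd x).hasDerivAt).sub this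
    have hQ : HasDerivAt (fun y => (b y * g y - 3 * a y * h y) / (deriv f y * g y ^ 2))
        ((((deriv b x * g x + b x * deriv g x)
          - (3 * deriv a x * h x + 3 * a x * deriv h x)) * (deriv f x * g x ^ 2)
          - (b x * g x - 3 * a x * h x)
            * (deriv (deriv f) x * g x ^ 2 + deriv f x * ((2 : ℕ) * g x ^ 1 * deriv g x)))
          / (deriv f x * g x ^ 2) ^ 2) x :=
      hN.div hM hMne
    have eB : deriv B (f x) * deriv f x
        = (((deriv b x * g x + b x * deriv g x)
          - (3 * deriv a x * h x + 3 * a x * deriv h x)) * (deriv f x * g x ^ 2)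
          - (b x * g x - 3 * a x * h x)
            * (deriv (deriv f) x * g x ^ 2 + deriv f x * ((2 : ℕ) * g x ^ 1 * deriv g x)))
          / (deriv f x * g x ^ 2) ^ 2 := by
      have h1 : deriv (fun y => B (f y)) x = deriv B (f x) * deriv f x :=
        deriv_comp x (hB (f x)) (hfd x)
      rw [← h1, show (fun y => B (f y))
        = fun y => (b y * g y - 3 * a y * h y) / (deriv f y * g y ^ 2) from funext hBe]
      exact hQ.deriv
    have hdA : deriv A (f x) = (deriv a x * (deriv f x * g x ^ 2)
          - a x * (deriv (deriv f) x * g x ^ 2 + deriv f x * ((2 : ℕ) * g x ^ 1 * deriv g x)))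
          / (deriv f x * g x ^ 2) ^ 2 / deriv f x := by
      rw [eq_div_iff (hf' x)]; exact eA
    have hdB : deriv B (f x) = (((deriv b x * g x + b x * deriv g x)
          - (3 * deriv a x * h x + 3 * a x * deriv h x)) * (deriv f x * g x ^ 2)
          - (b x * g x - 3 * a x * h x)
            * (deriv (deriv f) x * g x ^ 2 + deriv f x * ((2 : ℕ) * g x ^ 1 * deriv g x)))
          / (deriv f x * g x ^ 2) ^ 2 / deriv f x := by
      rw [eq_div_iff (hf' x)]; exact eB
    rw [hdA, hdB, hAe x, hBe x, hCe x, hDe x]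
    have hg' := hg0 x
    have hf'' := hf' x
    field_simp
    ring
  refine ⟨main, fun x => ?_⟩
  rw [main x]
  rw [div_eq_zero_iff]
  constructor
  · intro h0; exact Or.inl h0
  · rintro (h0 | h0)
    · exact h0
    · exact absurd h0 (mul_ne_zero (pow_ne_zero 3 (hf' x)) (pow_ne_zero 3 (hg0 x)))
end

section
/- Let a, b, c, d, f, g, h : ℝ → ℝ be smooth with f' ≠ 0 and g ≠ 0 everywhere, and let A, B, C : ℝ → ℝ be differentiable functions satisfying, for all x: A(f(x)) = a/(f'·g²), B(f(x)) = (b·g − 3a·h)/(f'·g²), C(f(x)) = (3a·h² − 2b·g·h + c·g² + g'·g)/(f'·g²). Then for all x, (A' + A·C − (1/3)·B²)(f(x)) = (1/(f'(x)²·g(x)²)) · ( a'(x) + a(x)·c(x) − (1/3)·b(x)² − a(x)·f''(x)/f'(x) − a(x)·g'(x)/g(x) ). (This is the transformation law of the quantity a' + ac − b²/3 that makes the Liouville–Appell recurrence produce relative invariants.) -/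
/-- the transformation law of the quantity `a' + a·c − b²/3` under
linear point transformations of Abel equations of the first kind. -/
theorem abel_P_transformation_law
    (a b c d f g h A B C : ℝ → ℝ)
    (ha : ContDiff ℝ (⊤ : ℕ∞) a) (hb : ContDiff ℝ (⊤ : ℕ∞) b)
    (hc : ContDiff ℝ (⊤ : ℕ∞) c) (hd : ContDiff ℝ (⊤ : ℕ∞) d)
    (hf : ContDiff ℝ (⊤ : ℕ∞) f) (hg : ContDiff ℝ (⊤ : ℕ∞) g)
    (hh : ContDiff ℝ (⊤ : ℕ∞) h)
    (hf' : ∀ x, deriv f x ≠ 0) (hg0 : ∀ x, g x ≠ 0)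
    (hA : Differentiable ℝ A) (hB : Differentiable ℝ B)
    (hC : Differentiable ℝ C)
    (hAe : ∀ x, A (f x) = a x / (deriv f x * g x ^ 2))
    (hBe : ∀ x, B (f x) = (b x * g x - 3 * a x * h x) / (deriv f x * g x ^ 2))
    (hCe : ∀ x, C (f x) = (3 * a x * h x ^ 2 - 2 * b x * g x * h x
      + c x * g x ^ 2 + deriv g x * g x) / (deriv f x * g x ^ 2)) :
    ∀ x, deriv A (f x) + A (f x) * C (f x) - (1/3) * B (f x) ^ 2
      = (1 / (deriv f x ^ 2 * g x ^ 2))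
        * (deriv a x + a x * c x - (1/3) * b x ^ 2
          - a x * deriv (deriv f) x / deriv f x
          - a x * deriv g x / g x) := by
  intro x
  have hfd : Differentiable ℝ f := hf.differentiable (by simp)
  have hf'c : ContDiff ℝ (⊤ : ℕ∞) (deriv f) := (contDiff_infty_iff_deriv.mp hf).2
  have h1 : HasDerivAt a (deriv a x) x := ((ha.differentiable (by simp)) x).hasDerivAt
  have h2 : HasDerivAt (deriv f) (deriv (deriv f) x) x :=
    ((hf'c.differentiable (by simp)) x).hasDerivAt
  have h3 : HasDerivAt g (deriv g x) x := ((hg.differentiable (by simp)) x).hasDerivAt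
  have hden : deriv f x * g x ^ 2 ≠ 0 := mul_ne_zero (hf' x) (pow_ne_zero 2 (hg0 x))
  have hu := h1.div (h2.mul (h3.pow 2)) hden
  have hcomp : HasDerivAt (fun y => A (f y)) (deriv A (f x) * deriv f x) x :=
    ((hA (f x)).hasDerivAt).comp x ((hfd x).hasDerivAt)
  have hAe' : (fun y => A (f y)) = fun y => a y / (deriv f y * g y ^ 2) := funext hAe
  rw [hAe'] at hcomp
  have huniq := hcomp.unique hu
  have hdA : deriv A (f x)
      = ((deriv a x * (deriv f x * g x ^ 2)
        - a x * (deriv (deriv f) x * g x ^ 2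
          + deriv f x * (2 * g x ^ 1 * deriv g x))) / (deriv f x * g x ^ 2) ^ 2)
        / deriv f x := by
    rw [eq_div_iff (hf' x)]
    exact huniq
  rw [hdA, hAe x, hBe x, hCe x]
  have hF := hf' x
  have hG := hg0 x
  field_simp
  ring
end

section
/- Let a, b, c, d, f, g, h : ℝ → ℝ be smooth with f' ≠ 0 and g ≠ 0 everywhere, and let A, B, C : ℝ → ℝ be differentiable satisfying A(f(x)) = a/(f'·g²), B(f(x)) = (b·g − 3a·h)/(f'·g²), C(f(x)) = (3a·h² − 2b·g·h + c·g² + g'·g)/(f'·g²) for all x. Let m be a positive integer, and let σ : ℝ → ℝ and S : ℝ → ℝ be differentiable functions such that S(f(x)) = σ(x)/(f'(x)·g(x))^m for all x (i.e., S is a relative invariant of weight m). Then the function A·S' − m·S·(A' + A·C − (1/3)·B²) is a relative invariant of weight m + 2: for all x, (A·S' − m·S·(A' + A·C − (1/3)·B²))(f(x)) = ( a(x)·σ'(x) − m·σ(x)·(a'(x) + a(x)·c(x) − (1/3)·b(x)²) ) / (f'(x)·g(x))^{m+2}. In particular the sequence s₃, s₅, s₇, … defined by s₃ = a'b − b'a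 + abc − (2/9)b³ − 3a²d and s_{2n+1} = a·s_{2n−1}' − (2n−1)·s_{2n−1}·(a' + ac − (1/3)b²) consists of relative invariants, s_{2n+1} having weight 2n+1. -/
/-- if `S` is a relative invariant of weight `m` of Abel equations
of the first kind, then `A·S' − m·S·(A' + A·C − B²/3)` is a relative invariant
of weight `m + 2` (the Liouville–Appell recurrence produces relative
invariants). -/
theorem abel_recurrence_relative_invariant
    (a b c d f g h A B C : ℝ → ℝ)
    (ha : ContDiff ℝ (⊤ : ℕ∞) a) (hb : ContDiff ℝ (⊤ : ℕ∞) b)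
    (hc : ContDiff ℝ (⊤ : ℕ∞) c) (hd : ContDiff ℝ (⊤ : ℕ∞) d)
    (hf : ContDiff ℝ (⊤ : ℕ∞) f) (hg : ContDiff ℝ (⊤ : ℕ∞) g)
    (hh : ContDiff ℝ (⊤ : ℕ∞) h)
    (hf' : ∀ x, deriv f x ≠ 0) (hg0 : ∀ x, g x ≠ 0)
    (hA : Differentiable ℝ A) (hB : Differentiable ℝ B)
    (hC : Differentiable ℝ C)
    (hAe : ∀ x, A (f x) = a x / (deriv f x * g x ^ 2))
    (hBe : ∀ x, B (f x) = (b x * g x - 3 * a x * h x) / (deriv f x * g x ^ 2))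
    (hCe : ∀ x, C (f x) = (3 * a x * h x ^ 2 - 2 * b x * g x * h x
      + c x * g x ^ 2 + deriv g x * g x) / (deriv f x * g x ^ 2))
    (m : ℕ) (hm : 0 < m)
    (σ S : ℝ → ℝ) (hσ : Differentiable ℝ σ) (hS : Differentiable ℝ S)
    (hSe : ∀ x, S (f x) = σ x / (deriv f x * g x) ^ m) :
    ∀ x, A (f x) * deriv S (f x)
        - (m : ℝ) * S (f x)
          * (deriv A (f x) + A (f x) * C (f x) - (1/3) * B (f x) ^ 2)
      = (a x * deriv σ x
          - (m : ℝ) * σ x * (deriv a x + a x * c x - (1/3) * b x ^ 2))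
        / (deriv f x * g x) ^ (m + 2) := by
  obtain ⟨k, rfl⟩ : ∃ k, m = k + 1 := ⟨m - 1, by omega⟩
  have hfd : Differentiable ℝ f := hf.differentiable (by norm_num)
  have hf'c : ContDiff ℝ (⊤ : ℕ∞) (deriv f) := (contDiff_infty_iff_deriv.mp hf).2
  have hf'd : Differentiable ℝ (deriv f) := hf'c.differentiable (by norm_num)
  have hgd : Differentiable ℝ g := hg.differentiable (by norm_num)
  have hg'd : Differentiable ℝ (deriv g) := (contDiff_infty_iff_deriv.mp hg).2.differentiable (by norm_num)
  have had : Differentiable ℝ a := ha.differentiable (by norm_num)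
  intro x
  set p := deriv f x with hp
  set q := g x with hq
  have hpq : p * q ≠ 0 := mul_ne_zero (hf' x) (hg0 x)
  have hP : HasDerivAt (fun x => deriv f x * g x)
      (deriv (deriv f) x * q + p * deriv g x) x :=
    ((hf'd x).hasDerivAt).mul ((hgd x).hasDerivAt)
  have hPm := hP.pow (k + 1)
  rw [Nat.add_sub_cancel] at hPm
  have hQ := ((hσ x).hasDerivAt).div hPm (pow_ne_zero _ hpq)
  have hSd : deriv S (f x) * p =
      (deriv σ x * (p * q) ^ (k + 1) -
        σ x * ((↑(k + 1) : ℝ) * (p * q) ^ k *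
          (deriv (deriv f) x * q + p * deriv g x))) / ((p * q) ^ (k + 1)) ^ 2 := by
    have hcomp : deriv (S ∘ f) x = deriv S (f x) * p :=
      deriv_comp x (hS (f x)) (hfd x)
    have hfe : S ∘ f = fun x => σ x / (deriv f x * g x) ^ (k + 1) := funext hSe
    rw [hfe] at hcomp
    rw [← hcomp]; exact hQ.deriv
  -- derivative of A ∘ f
  have hD : HasDerivAt (fun x => deriv f x * g x ^ 2)
      (deriv (deriv f) x * q ^ 2 + p * (2 * q ^ 1 * deriv g x)) x :=
    ((hf'd x).hasDerivAt).mul (((hgd x).hasDerivAt).pow 2)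
  have hDne : p * q ^ 2 ≠ 0 := mul_ne_zero (hf' x) (pow_ne_zero _ (hg0 x))
  have hQA := ((had x).hasDerivAt).div hD hDne
  have hAd : deriv A (f x) * p =
      (deriv a x * (p * q ^ 2) -
        a x * (deriv (deriv f) x * q ^ 2 + p * (2 * q ^ 1 * deriv g x))) /
        (p * q ^ 2) ^ 2 := by
    have hcomp : deriv (A ∘ f) x = deriv A (f x) * p :=
      deriv_comp x (hA (f x)) (hfd x)
    have hfe : A ∘ f = fun x => a x / (deriv f x * g x ^ 2) := funext hAe
    rw [hfe] at hcomp
    rw [← hcomp]; exact hQA.deriv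
  have hSdv : deriv S (f x) =
      (deriv σ x * (p * q) ^ (k + 1) -
        σ x * ((↑(k + 1) : ℝ) * (p * q) ^ k *
          (deriv (deriv f) x * q + p * deriv g x))) / ((p * q) ^ (k + 1)) ^ 2 / p := by
    rw [eq_div_iff (show p ≠ 0 from hf' x)]
    exact hSd
  have hAdv : deriv A (f x) =
      (deriv a x * (p * q ^ 2) -
        a x * (deriv (deriv f) x * q ^ 2 + p * (2 * q ^ 1 * deriv g x))) /
        (p * q ^ 2) ^ 2 / p := by
    rw [eq_div_iff (show p ≠ 0 from hf' x)]
    exact hAd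
  rw [hAe, hBe, hCe, hSe, hSdv, hAdv]
  have hqne : q ≠ 0 := hg0 x
  have hpne : p ≠ 0 := hf' x
  push_cast
  rw [← hp, ← hq]
  field_simp
  ring
end

section
/- Let a, b, c, d : ℝ → ℝ be smooth on an open interval U, and suppose s₃ > 0 on U, where s₃ = a'b − b'a + abc − (2/9)b³ − 3a²d. Set P = a' + ac − (1/3)b², s₅ = a·s₃' − 3·s₃·P, s₇ = a·s₅' − 5·s₅·P, J₁ = s₅³/s₃⁵, J₂ = s₅·s₇/s₃⁴, and for a differentiable function F define ∇F = (a/s₃^{2/3})·F'. Then on U the real cube root J₁^{1/3} = s₅/s₃^{5/3} satisfies the identity J₁^{1/3} · ∇(J₁^{1/3}) = J₂ − (5/3)·J₁. Consequently J₂ is a function of J₁ and ∇J₁, so the invariants J₁ and the invariant derivation ∇ generate J₂. -/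
/-- The relative invariant `s₃ = a'b − b'a + abc − (2/9)b³ − 3a²d`. -/
noncomputable def abelS3 (a b c d : ℝ → ℝ) : ℝ → ℝ := fun x =>
  deriv a x * b x - deriv b x * a x + a x * b x * c x
    - (2/9) * b x ^ 3 - 3 * a x ^ 2 * d x

/-- The quantity `P = a' + ac − b²/3`. -/
noncomputable def abelP (a b c : ℝ → ℝ) : ℝ → ℝ := fun x =>
  deriv a x + a x * c x - (1/3) * b x ^ 2

/-- The relative invariant `s₅ = a·s₃' − 3·s₃·P`. -/
noncomputable def abelS5 (a b c d : ℝ → ℝ) : ℝ → ℝ := fun x =>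
  a x * deriv (abelS3 a b c d) x - 3 * abelS3 a b c d x * abelP a b c x

/-- The relative invariant `s₇ = a·s₅' − 5·s₅·P`. -/
noncomputable def abelS7 (a b c d : ℝ → ℝ) : ℝ → ℝ := fun x =>
  a x * deriv (abelS5 a b c d) x - 5 * abelS5 a b c d x * abelP a b c x

lemma rpow_third (y : ℝ) (hy : 0 < y) (n : ℕ) :
    y ^ ((n:ℝ)/3) = (y ^ ((1:ℝ)/3)) ^ n := by
  rw [← Real.rpow_natCast (y ^ ((1:ℝ)/3)) n, ← Real.rpow_mul hy.le]
  congr 1; ring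

/-- with `J₁ = s₅³/s₃⁵`, `J₂ = s₅·s₇/s₃⁴` and
`∇F = (a/s₃^{2/3})·F'`, the real cube root `J₁^{1/3} = s₅/s₃^{5/3}` satisfies
`J₁^{1/3}·∇(J₁^{1/3}) = J₂ − (5/3)·J₁`; hence `J₁` and `∇` generate `J₂`. -/
theorem abel_J2_from_J1_and_nabla
    (a b c d : ℝ → ℝ)
    (ha : ContDiff ℝ (⊤ : ℕ∞) a) (hb : ContDiff ℝ (⊤ : ℕ∞) b)
    (hc : ContDiff ℝ (⊤ : ℕ∞) c) (hd : ContDiff ℝ (⊤ : ℕ∞) d)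
    (U : Set ℝ) (hU : ∃ p q : ℝ, U = Set.Ioo p q)
    (hs3 : ∀ x ∈ U, 0 < abelS3 a b c d x) :
    ∀ x ∈ U,
      (abelS5 a b c d x / abelS3 a b c d x ^ ((5:ℝ)/3))
        * ((a x / abelS3 a b c d x ^ ((2:ℝ)/3))
            * deriv (fun t => abelS5 a b c d t
                / abelS3 a b c d t ^ ((5:ℝ)/3)) x)
      = abelS5 a b c d x * abelS7 a b c d x / abelS3 a b c d x ^ 4
        - (5/3) * (abelS5 a b c d x ^ 3 / abelS3 a b c d x ^ 5) := by
  intro x hx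
  have hda := (contDiff_infty_iff_deriv.mp ha).2
  have hdb := (contDiff_infty_iff_deriv.mp hb).2
  have hS3 : ContDiff ℝ (⊤ : ℕ∞) (abelS3 a b c d) := by
    unfold abelS3; fun_prop
  have hP : ContDiff ℝ (⊤ : ℕ∞) (abelP a b c) := by
    unfold abelP; fun_prop
  have hdS3 := (contDiff_infty_iff_deriv.mp hS3).2
  have hS5 : ContDiff ℝ (⊤ : ℕ∞) (abelS5 a b c d) := by
    unfold abelS5; fun_prop
  have hpos := hs3 x hx
  have h3 : HasDerivAt (abelS3 a b c d) (deriv (abelS3 a b c d) x) x :=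
    ((hS3.differentiable (by simp)) x).hasDerivAt
  have h5 : HasDerivAt (abelS5 a b c d) (deriv (abelS5 a b c d) x) x :=
    ((hS5.differentiable (by simp)) x).hasDerivAt
  have hpow : HasDerivAt (fun t => abelS3 a b c d t ^ ((5:ℝ)/3))
      (deriv (abelS3 a b c d) x * ((5:ℝ)/3) * abelS3 a b c d x ^ ((5:ℝ)/3 - 1)) x :=
    h3.rpow_const (Or.inl hpos.ne')
  have hne : abelS3 a b c d x ^ ((5:ℝ)/3) ≠ 0 := (Real.rpow_pos_of_pos hpos _).ne'
  have hQ := h5.div hpow hne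
  rw [show (fun t => abelS5 a b c d t / abelS3 a b c d t ^ ((5:ℝ)/3)) = abelS5 a b c d / (fun t => abelS3 a b c d t ^ ((5:ℝ)/3)) from rfl, hQ.deriv]
  set u := abelS3 a b c d x ^ ((1:ℝ)/3) with hu
  have hupos : 0 < u := Real.rpow_pos_of_pos hpos _
  have h53 : abelS3 a b c d x ^ ((5:ℝ)/3) = u ^ 5 := by
    have := rpow_third (abelS3 a b c d x) hpos 5; norm_num at this ⊢; exact this
  have h23 : abelS3 a b c d x ^ ((2:ℝ)/3) = u ^ 2 := by
    have := rpow_third (abelS3 a b c d x) hpos 2; norm_num at this ⊢; exact this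
  have h231 : abelS3 a b c d x ^ ((5:ℝ)/3 - 1) = u ^ 2 := by
    rw [show (5:ℝ)/3 - 1 = (2:ℝ)/3 by norm_num]; exact h23
  have hu3 : abelS3 a b c d x = u ^ 3 := by
    have := rpow_third (abelS3 a b c d x) hpos 3
    norm_num at this
    rw [this]
  have hS7eq : abelS7 a b c d x = a x * deriv (abelS5 a b c d) x
      - 5 * abelS5 a b c d x * abelP a b c x := rfl
  have hS5eq : abelS5 a b c d x = a x * deriv (abelS3 a b c d) x
      - 3 * abelS3 a b c d x * abelP a b c x := rfl
  rw [hS7eq, h53, h23, h231, hS5eq, hu3]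
  field_simp
  ring
end

section
/- Let a, b, c, d, f, g, h : ℝ → ℝ be smooth with f' > 0 and g > 0 everywhere, and let A, B, C, D : ℝ → ℝ be differentiable satisfying the transformation identities A(f(x)) = a/(f'·g²), B(f(x)) = (b·g − 3a·h)/(f'·g²), C(f(x)) = (3a·h² − 2b·g·h + c·g² + g'·g)/(f'·g²), D(f(x)) = (−a·h³ + b·g·h² − c·g²·h + d·g³ + h'·g² − g'·g·h)/(f'·g²) for all x. Define s₃ = a'b − b'a + abc − (2/9)b³ − 3a²d from (a,b,c,d) and S₃ likewise from (A,B,C,D), and assume s₃ > 0 on an open interval U. Let I, Ĩ : ℝ → ℝ be differentiable with Ĩ(f(x)) = I(x) for all x ∈ U. Then for all x ∈ U, ( (A / S₃^{2/3}) · Ĩ' )(f(x)) = ( a(x) / s₃(x)^{2/3} ) · I'(x). That is, ∇ = (s₁/s₃^{2/3})·d/dx (with s₁ = a) is an invariant derivation: it commutes with the action of the pseudogroup of linear transformations on absolute invariants. -/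
/-- `∇ = (s₁/s₃^{2/3})·d/dx` (with `s₁ = a`) is an invariant
derivation: it commutes with the action of the pseudogroup of linear
transformations on absolute invariants. -/
theorem abel_invariant_derivation
    (a b c d f g h A B C D : ℝ → ℝ)
    (ha : ContDiff ℝ (⊤ : ℕ∞) a) (hb : ContDiff ℝ (⊤ : ℕ∞) b)
    (hc : ContDiff ℝ (⊤ : ℕ∞) c) (hd : ContDiff ℝ (⊤ : ℕ∞) d)
    (hf : ContDiff ℝ (⊤ : ℕ∞) f) (hg : ContDiff ℝ (⊤ : ℕ∞) g)
    (hh : ContDiff ℝ (⊤ : ℕ∞) h)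
    (hf' : ∀ x, 0 < deriv f x) (hg0 : ∀ x, 0 < g x)
    (hA : Differentiable ℝ A) (hB : Differentiable ℝ B)
    (hC : Differentiable ℝ C) (hD : Differentiable ℝ D)
    (hAe : ∀ x, A (f x) = a x / (deriv f x * g x ^ 2))
    (hBe : ∀ x, B (f x) = (b x * g x - 3 * a x * h x) / (deriv f x * g x ^ 2))
    (hCe : ∀ x, C (f x) = (3 * a x * h x ^ 2 - 2 * b x * g x * h x
      + c x * g x ^ 2 + deriv g x * g x) / (deriv f x * g x ^ 2))
    (hDe : ∀ x, D (f x) = (-(a x) * h x ^ 3 + b x * g x * h x ^ 2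
      - c x * g x ^ 2 * h x + d x * g x ^ 3 + deriv h x * g x ^ 2
      - deriv g x * g x * h x) / (deriv f x * g x ^ 2))
    (U : Set ℝ) (hU : ∃ p q : ℝ, U = Set.Ioo p q)
    (hs3 : ∀ x ∈ U, 0 < abelS3 a b c d x)
    (I Itil : ℝ → ℝ) (hI : Differentiable ℝ I) (hItil : Differentiable ℝ Itil)
    (hmatch : ∀ x ∈ U, Itil (f x) = I x) :
    ∀ x ∈ U,
      (A (f x) / abelS3 A B C D (f x) ^ ((2:ℝ)/3)) * deriv Itil (f x)
        = (a x / abelS3 a b c d x ^ ((2:ℝ)/3)) * deriv I x := by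
  have hfd : Differentiable ℝ f := hf.differentiable (by simp)
  have hgd : Differentiable ℝ g := hg.differentiable (by simp)
  have hhd : Differentiable ℝ h := hh.differentiable (by simp)
  have had : Differentiable ℝ a := ha.differentiable (by simp)
  have hbd : Differentiable ℝ b := hb.differentiable (by simp)
  have hf'd : Differentiable ℝ (deriv f) :=
    (contDiff_infty_iff_deriv.mp hf).2.differentiable (by simp)
  have hdne : ∀ t : ℝ, deriv f t * g t ^ 2 ≠ 0 := fun t =>
    ne_of_gt (mul_pos (hf' t) (pow_pos (hg0 t) 2))
  have key : ∀ (P φ : ℝ → ℝ), Differentiable ℝ P → (∀ t, P (f t) = φ t) →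
      ∀ x, deriv P (f x) * deriv f x = deriv φ x := by
    intro P φ hP he x
    have h1 : HasDerivAt (fun t => P (f t)) (deriv P (f x) * deriv f x) x :=
      (hP (f x)).hasDerivAt.comp x (hfd x).hasDerivAt
    have h2 : (fun t => P (f t)) = φ := funext he
    rw [h2] at h1
    exact h1.deriv.symm
  intro x hx
  have hFne : deriv f x ≠ 0 := ne_of_gt (hf' x)
  have hGne : g x ≠ 0 := ne_of_gt (hg0 x)
  -- derivative of the common denominator
  have Hg2 : HasDerivAt (fun t => g t ^ 2) (2 * g x * deriv g x) x := by
    have h1 := (hgd x).hasDerivAt.pow 2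
    norm_num at h1
    exact h1
  have Hden : HasDerivAt (fun t => deriv f t * g t ^ 2)
      (deriv (deriv f) x * g x ^ 2 + deriv f x * (2 * g x * deriv g x)) x :=
    (hf'd x).hasDerivAt.mul Hg2
  -- derivative of A ∘ f expressed explicitly
  have HA : HasDerivAt (fun t => a t / (deriv f t * g t ^ 2))
      ((deriv a x * (deriv f x * g x ^ 2)
        - a x * (deriv (deriv f) x * g x ^ 2 + deriv f x * (2 * g x * deriv g x)))
        / (deriv f x * g x ^ 2) ^ 2) x :=
    (had x).hasDerivAt.div Hden (hdne x)
  have HBnum : HasDerivAt (fun t => b t * g t - 3 * a t * h t)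
      (deriv b x * g x + b x * deriv g x
        - (3 * deriv a x * h x + 3 * a x * deriv h x)) x :=
    ((hbd x).hasDerivAt.mul (hgd x).hasDerivAt).sub
      (((had x).hasDerivAt.const_mul (3:ℝ)).mul (hhd x).hasDerivAt)
  have HB : HasDerivAt (fun t => (b t * g t - 3 * a t * h t) / (deriv f t * g t ^ 2))
      (((deriv b x * g x + b x * deriv g x
          - (3 * deriv a x * h x + 3 * a x * deriv h x)) * (deriv f x * g x ^ 2)
        - (b x * g x - 3 * a x * h x)
          * (deriv (deriv f) x * g x ^ 2 + deriv f x * (2 * g x * deriv g x)))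
        / (deriv f x * g x ^ 2) ^ 2) x :=
    HBnum.div Hden (hdne x)
  have dA := (key A _ hA hAe x).trans HA.deriv
  have dB := (key B _ hB hBe x).trans HB.deriv
  have hdAx := eq_div_of_mul_eq hFne dA
  have hdBx := eq_div_of_mul_eq hFne dB
  -- the transformation law for the relative invariant
  have hS3 : abelS3 A B C D (f x)
      = abelS3 a b c d x / (deriv f x ^ 3 * g x ^ 3) := by
    simp only [abelS3]
    rw [hdAx, hdBx, hAe x, hBe x, hCe x, hDe x]
    field_simp
    ring
  have hs3x := hs3 x hx
  have hFG : (0:ℝ) < deriv f x * g x := mul_pos (hf' x) (hg0 x)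
  have hpow : abelS3 A B C D (f x) ^ ((2:ℝ)/3)
      = abelS3 a b c d x ^ ((2:ℝ)/3) / (deriv f x ^ 2 * g x ^ 2) := by
    rw [hS3, Real.div_rpow (le_of_lt hs3x) (mul_pos (pow_pos (hf' x) 3) (pow_pos (hg0 x) 3)).le]
    congr 1
    rw [show deriv f x ^ 3 * g x ^ 3 = (deriv f x * g x) ^ 3 by ring,
        show deriv f x ^ 2 * g x ^ 2 = (deriv f x * g x) ^ 2 by ring,
        ← Real.rpow_natCast (deriv f x * g x) 3,
        ← Real.rpow_mul hFG.le, ← Real.rpow_natCast (deriv f x * g x) 2]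
    norm_num
  -- chain rule for the invariant on the open interval
  obtain ⟨p, q, rfl⟩ := hU
  have hev : (fun t => Itil (f t)) =ᶠ[nhds x] I :=
    Filter.eventuallyEq_of_mem (isOpen_Ioo.mem_nhds hx) (fun t ht => hmatch t ht)
  have dI : deriv I x = deriv Itil (f x) * deriv f x := by
    rw [← hev.deriv_eq]
    exact ((hItil (f x)).hasDerivAt.comp x (hfd x).hasDerivAt).deriv
  have hs3pne : abelS3 a b c d x ^ ((2:ℝ)/3) ≠ 0 :=
    ne_of_gt (Real.rpow_pos_of_pos hs3x _)
  rw [hAe x, hpow, dI]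
  field_simp
end

section
/- Let a, b, c, d : ℝ → ℝ be smooth with a(x) ≠ 0 for all x, and let x₀ ∈ ℝ. Then there exist an open interval V containing x₀, smooth functions f, g, h : V → ℝ with f' ≠ 0 and g ≠ 0 on V, and a smooth function R : ℝ → ℝ, such that for every differentiable y : V → ℝ satisfying y'(x) = a(x)·y(x)³ + b(x)·y(x)² + c(x)·y(x) + d(x) on V and every differentiable Y with Y(f(x)) = g(x)·y(x) + h(x) for all x ∈ V, one has Y'(f(x)) = Y(f(x))³ + R(f(x)) for all x ∈ V. That is, every Abel equation of the first kind can locally be brought to the canonical form Y' = Y³ + R by a linear point transformation. -/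
open scoped ContDiff

/-- every Abel equation of the first kind can locally be brought
to the canonical form `Y' = Y³ + R` by a linear point transformation. -/
theorem abel_local_canonical_form
    (a b c d : ℝ → ℝ)
    (ha : ContDiff ℝ (⊤ : ℕ∞) a) (hb : ContDiff ℝ (⊤ : ℕ∞) b)
    (hc : ContDiff ℝ (⊤ : ℕ∞) c) (hd : ContDiff ℝ (⊤ : ℕ∞) d)
    (ha0 : ∀ x, a x ≠ 0) (x₀ : ℝ) :
    ∃ (u v : ℝ) (f g h R : ℝ → ℝ),
      x₀ ∈ Set.Ioo u v
      ∧ ContDiffOn ℝ (⊤ : ℕ∞) f (Set.Ioo u v)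
      ∧ ContDiffOn ℝ (⊤ : ℕ∞) g (Set.Ioo u v)
      ∧ ContDiffOn ℝ (⊤ : ℕ∞) h (Set.Ioo u v)
      ∧ ContDiff ℝ (⊤ : ℕ∞) R
      ∧ (∀ x ∈ Set.Ioo u v, deriv f x ≠ 0)
      ∧ (∀ x ∈ Set.Ioo u v, g x ≠ 0)
      ∧ ∀ y Y : ℝ → ℝ,
          (∀ x ∈ Set.Ioo u v, DifferentiableAt ℝ y x) →
          (∀ x ∈ Set.Ioo u v, deriv y x
            = a x * y x ^ 3 + b x * y x ^ 2 + c x * y x + d x) →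
          (∀ x ∈ Set.Ioo u v, DifferentiableAt ℝ Y (f x)) →
          (∀ x ∈ Set.Ioo u v, Y (f x) = g x * y x + h x) →
          ∀ x ∈ Set.Ioo u v, deriv Y (f x) = Y (f x) ^ 3 + R (f x) := by
  have hone : (1 : WithTop ℕ∞) ≤ ((⊤ : ℕ∞) : WithTop ℕ∞) := by exact_mod_cast le_top
  -- the function `P = b²/(3a) - c` (logarithmic derivative of `g`)
  set P : ℝ → ℝ := fun t => b t ^ 2 / (3 * a t) - c t with hPdef
  have hP : ContDiff ℝ (⊤ : ℕ∞) P :=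
    ((hb.pow 2).div (contDiff_const.mul ha) (fun x => by have := ha0 x; positivity)).sub hc
  -- `G` is an antiderivative of `P`
  set G : ℝ → ℝ := fun x => ∫ t in (0:ℝ)..x, P t with hGdef
  have hGd : ∀ x : ℝ, HasDerivAt G (P x) x :=
    fun x => (hP.continuous.integral_hasStrictDerivAt 0 x).hasDerivAt
  have hG : ContDiff ℝ (⊤ : ℕ∞) G := by
    refine contDiff_infty_iff_deriv.mpr ⟨fun x => (hGd x).differentiableAt, ?_⟩
    have : deriv G = P := funext fun x => (hGd x).deriv
    rw [this]; exact hP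
  -- the scaling function `g = exp G`
  set g0 : ℝ → ℝ := fun x => Real.exp (G x) with hg0def
  have hg0 : ContDiff ℝ (⊤ : ℕ∞) g0 := Real.contDiff_exp.comp hG
  have hg0ne : ∀ x, g0 x ≠ 0 := fun x => (Real.exp_pos _).ne'
  have hg0d : ∀ x, HasDerivAt g0 (g0 x * P x) x := fun x => (hGd x).exp
  -- the derivative of the new independent variable: `Q = a/g²`
  set Q : ℝ → ℝ := fun t => a t / g0 t ^ 2 with hQdef
  have hQ : ContDiff ℝ (⊤ : ℕ∞) Q := ha.div (hg0.pow 2) (fun x => pow_ne_zero 2 (hg0ne x))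
  have hQ0 : ∀ x, Q x ≠ 0 := fun x => div_ne_zero (ha0 x) (pow_ne_zero 2 (hg0ne x))
  -- the new independent variable `F`
  set F : ℝ → ℝ := fun x => ∫ t in (0:ℝ)..x, Q t with hFdef
  have hFs : ∀ x : ℝ, HasStrictDerivAt F (Q x) x :=
    fun x => hQ.continuous.integral_hasStrictDerivAt 0 x
  have hFd : ∀ x : ℝ, HasDerivAt F (Q x) x := fun x => (hFs x).hasDerivAt
  have hF : ContDiff ℝ (⊤ : ℕ∞) F := by
    refine contDiff_infty_iff_deriv.mpr ⟨fun x => (hFd x).differentiableAt, ?_⟩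
    have : deriv F = Q := funext fun x => (hFd x).deriv
    rw [this]; exact hQ
  -- the shift `h = g·b/(3a)`
  set h0 : ℝ → ℝ := fun x => g0 x * b x / (3 * a x) with hh0def
  have hh0 : ContDiff ℝ (⊤ : ℕ∞) h0 :=
    (hg0.mul hb).div (contDiff_const.mul ha) (fun x => by have := ha0 x; positivity)
  have hh0d : ∀ x : ℝ, HasDerivAt h0 (deriv h0 x) x :=
    fun x => (hh0.differentiable (by simp) x).hasDerivAt
  have hdh0 : ContDiff ℝ (⊤ : ℕ∞) (deriv h0) := (contDiff_infty_iff_deriv.mp hh0).2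
  -- the new free coefficient, as a function of the old variable
  set S : ℝ → ℝ := fun x => (g0 x * d x + deriv h0 x) * (g0 x ^ 2 / a x) - h0 x ^ 3 with hSdef
  have hS : ContDiff ℝ (⊤ : ℕ∞) S :=
    (((hg0.mul hd).add hdh0).mul ((hg0.pow 2).div ha (fun x => ha0 x))).sub (hh0.pow 3)
  -- local inverse of `F` near `x₀`
  set Finv : ℝ → ℝ := (hFs x₀).localInverse F (Q x₀) x₀ (hQ0 x₀) with hFinvdef
  have hleft : ∀ᶠ t in nhds x₀, Finv (F t) = t :=
    ((hFs x₀).hasStrictFDerivAt_equiv (hQ0 x₀)).eventually_left_inverse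
  obtain ⟨ε, hε, hball⟩ := Metric.eventually_nhds_iff.mp hleft
  have hFinvC : ∀ x : ℝ, dist x x₀ < ε → ContDiffAt ℝ (⊤ : ℕ∞) Finv (F x) := by
    intro x hx
    have hg : ∀ᶠ t in nhds x, Finv (F t) = t := by
      filter_upwards [Metric.ball_mem_nhds x (show (0:ℝ) < ε - dist x x₀ by linarith)] with t ht
      exact hball (lt_of_le_of_lt (dist_triangle t x x₀)
        (by have := Metric.mem_ball.mp ht; linarith))
    have hFe : HasFDerivAt F
        ((ContinuousLinearEquiv.unitsEquivAut ℝ (Units.mk0 (Q x) (hQ0 x))) : ℝ →L[ℝ] ℝ) x :=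
      (hFd x).hasFDerivAt_equiv (hQ0 x)
    have h1 : ContDiffAt ℝ (⊤ : ℕ∞) (hF.contDiffAt.localInverse hFe (by simp)) (F x) :=
      hF.contDiffAt.to_localInverse hFe (by simp)
    exact h1.congr_of_eventuallyEq
      (((hFs x).hasStrictFDerivAt_equiv (hQ0 x)).localInverse_unique hg)
  -- `F` is an open map, so the image of the ball is open
  have hFopen : IsOpenMap F := isOpenMap_of_hasStrictDerivAt hFs hQ0
  have hWopen : IsOpen (F '' Metric.ball x₀ ε) := hFopen _ Metric.isOpen_ball
  obtain ⟨r, hr, hrsub⟩ := Metric.isOpen_iff.mp hWopen (F x₀)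
    ⟨x₀, Metric.mem_ball_self hε, rfl⟩
  -- bump function
  set φ : ContDiffBump (F x₀) := ⟨r/4, r/2, by linarith, by linarith⟩ with hφdef
  set R : ℝ → ℝ := fun z => φ z * S (Finv z) with hRdef
  have hsupp : tsupport (φ : ℝ → ℝ) ⊆ F '' Metric.ball x₀ ε := by
    rw [φ.tsupport_eq]
    exact (Metric.closedBall_subset_ball (show r/2 < r by linarith)).trans hrsub
  have hR : ContDiff ℝ (⊤ : ℕ∞) R := by
    rw [contDiff_iff_contDiffAt]; intro z
    by_cases hz : z ∈ F '' Metric.ball x₀ ε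
    · obtain ⟨x, hx, rfl⟩ := hz
      exact φ.contDiff.contDiffAt.mul
        (hS.contDiffAt.comp _ (hFinvC x (Metric.mem_ball.mp hx)))
    · have hz' : z ∉ tsupport (φ : ℝ → ℝ) := fun hmem => hz (hsupp hmem)
      have hev : ∀ᶠ w in nhds z, R w = (fun _ : ℝ => (0:ℝ)) w := by
        filter_upwards [(isClosed_tsupport (φ : ℝ → ℝ)).isOpen_compl.mem_nhds hz'] with w hw
        simp [hRdef, image_eq_zero_of_notMem_tsupport hw]
      exact (contDiffAt_const (c := (0:ℝ))).congr_of_eventuallyEq hev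
  -- choose the interval
  obtain ⟨δ₁, hδ₁, hδball⟩ := Metric.continuousAt_iff.mp
    (hF.continuous.continuousAt (x := x₀)) (r/4) (by linarith)
  set δ : ℝ := min δ₁ ε with hδdef
  have hδ : 0 < δ := lt_min hδ₁ hε
  refine ⟨x₀ - δ, x₀ + δ, F, g0, h0, R, ⟨by linarith, by linarith⟩,
    hF.contDiffOn, hg0.contDiffOn, hh0.contDiffOn, hR, ?_, ?_, ?_⟩
  · intro x _; rw [(hFd x).deriv]; exact hQ0 x
  · intro x _; exact hg0ne x
  · intro y Y hy hyode hY hYF x hx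
    have hxd : dist x x₀ < δ := by
      rw [Real.dist_eq, abs_lt]
      obtain ⟨h1, h2⟩ := hx; constructor <;> linarith
    have hxε : dist x x₀ < ε := lt_of_lt_of_le hxd (min_le_right _ _)
    have hFinvx : Finv (F x) = x := hball hxε
    have hφ1 : φ (F x) = 1 := φ.one_of_mem_closedBall (by
      rw [Metric.mem_closedBall]
      exact le_of_lt (hδball (lt_of_lt_of_le hxd (min_le_left _ _))))
    have hRF : R (F x) = S x := by
      show φ (F x) * S (Finv (F x)) = S x
      rw [hφ1, hFinvx, one_mul]
    -- chain rule
    have hYd : HasDerivAt Y (deriv Y (F x)) (F x) := (hY x hx).hasDerivAt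
    have hcomp : HasDerivAt (fun t => Y (F t)) (deriv Y (F x) * Q x) x :=
      hYd.comp x (hFd x)
    have heq : (fun t => Y (F t)) =ᶠ[nhds x] (fun t => g0 t * y t + h0 t) := by
      filter_upwards [isOpen_Ioo.mem_nhds hx] with t ht
      exact hYF t ht
    have hcomp' : HasDerivAt (fun t => g0 t * y t + h0 t) (deriv Y (F x) * Q x) x :=
      hcomp.congr_of_eventuallyEq heq.symm
    have hrhs : HasDerivAt (fun t => g0 t * y t + h0 t)
        (g0 x * P x * y x + g0 x * deriv y x + deriv h0 x) x :=
      ((hg0d x).mul (hy x hx).hasDerivAt).add (hh0d x)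
    have key : deriv Y (F x) * Q x
        = g0 x * P x * y x + g0 x * deriv y x + deriv h0 x := hcomp'.unique hrhs
    rw [hyode x hx] at key
    rw [hYF x hx, hRF]
    have hDY : deriv Y (F x) = (g0 x * P x * y x
        + g0 x * (a x * y x ^ 3 + b x * y x ^ 2 + c x * y x + d x) + deriv h0 x) / Q x :=
      (eq_div_iff (hQ0 x)).mpr key
    rw [hDY]
    simp only [hPdef, hQdef, hh0def, hSdef]
    have hax := ha0 x
    have hgx := hg0ne x
    have h3 : (3:ℝ) * a x ≠ 0 := mul_ne_zero three_ne_zero hax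
    field_simp
    ring
end

section
/- Let a, b, c, d : ℝ → ℝ be smooth with a(x) ≠ 0 for all x, and suppose the relative invariant s₃ = a'b − b'a + abc − (2/9)b³ − 3a²d vanishes identically. Then for every x₀ ∈ ℝ there exist an open interval V containing x₀ and smooth functions f, g, h : V → ℝ with f' ≠ 0 and g ≠ 0 on V, such that for every differentiable y : V → ℝ satisfying y'(x) = a(x)·y(x)³ + b(x)·y(x)² + c(x)·y(x) + d(x) on V and every differentiable Y with Y(f(x)) = g(x)·y(x) + h(x) for all x ∈ V, one has Y'(f(x)) = Y(f(x))³ for all x ∈ V. In particular, all Abel equations satisfying s₃ = 0 are locally equivalent to Y' = Y³, hence to each other. -/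
open MeasureTheory intervalIntegral in
lemma exists_antideriv (φ : ℝ → ℝ) (hφ : ContDiff ℝ (⊤ : ℕ∞) φ) :
    ∃ F : ℝ → ℝ, ContDiff ℝ (⊤ : ℕ∞) F ∧ ∀ x, HasDerivAt F (φ x) x := by
  have hcont := hφ.continuous
  have hder : ∀ x : ℝ, HasDerivAt (fun u => ∫ t in (0:ℝ)..u, φ t) (φ x) x := by
    intro x
    exact integral_hasDerivAt_right (hcont.intervalIntegrable 0 x)
      hcont.aestronglyMeasurable.stronglyMeasurableAtFilter hcont.continuousAt
  refine ⟨_, ?_, hder⟩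
  rw [contDiff_infty_iff_deriv]
  constructor
  · exact fun x => (hder x).differentiableAt
  · have : deriv (fun u => ∫ t in (0:ℝ)..u, φ t) = φ := funext fun x => (hder x).deriv
    rw [this]; exact hφ

lemma abel_key (A B C Dd Ap Bp G P Z : ℝ) (hA : A ≠ 0) (hG : G ≠ 0)
    (hs : Ap * B - Bp * A + A * B * C - (2/9) * B ^ 3 - 3 * A ^ 2 * Dd = 0)
    (hZ : Z * (A / G ^ 2)
      = G * (B ^ 2 / (3 * A) - C) * P + G * (A * P ^ 3 + B * P ^ 2 + C * P + Dd)
        + ((G * (B ^ 2 / (3 * A) - C) * B + G * Bp) * (3 * A) - G * B * (3 * Ap)) / (3 * A) ^ 2) :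
    Z = (G * P + G * B / (3 * A)) ^ 3 := by
  have hDd : Dd = (Ap * B - Bp * A + A * B * C - (2/9) * B ^ 3) / (3 * A ^ 2) := by
    field_simp
    linarith [hs]
  subst hDd
  have hne : A / G ^ 2 ≠ 0 := div_ne_zero hA (pow_ne_zero _ hG)
  have hZ2 : Z = (G * (B ^ 2 / (3 * A) - C) * P
      + G * (A * P ^ 3 + B * P ^ 2 + C * P + (Ap * B - Bp * A + A * B * C - (2/9) * B ^ 3) / (3 * A ^ 2))
      + ((G * (B ^ 2 / (3 * A) - C) * B + G * Bp) * (3 * A) - G * B * (3 * Ap)) / (3 * A) ^ 2)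
      / (A / G ^ 2) := (eq_div_iff hne).mpr hZ
  subst hZ2
  field_simp
  ring

/-- every Abel equation of the first kind with vanishing relative
invariant `s₃ = a'b − b'a + abc − (2/9)b³ − 3a²d` is locally equivalent, via a
linear point transformation, to the canonical equation `Y' = Y³`. -/
theorem abel_s3_zero_locally_equivalent_to_Y3
    (a b c d : ℝ → ℝ)
    (ha : ContDiff ℝ (⊤ : ℕ∞) a) (hb : ContDiff ℝ (⊤ : ℕ∞) b)
    (hc : ContDiff ℝ (⊤ : ℕ∞) c) (hd : ContDiff ℝ (⊤ : ℕ∞) d)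
    (ha0 : ∀ x, a x ≠ 0)
    (hs3 : ∀ x, deriv a x * b x - deriv b x * a x + a x * b x * c x
      - (2/9) * b x ^ 3 - 3 * a x ^ 2 * d x = 0) :
    ∀ x₀ : ℝ, ∃ (u v : ℝ) (f g h : ℝ → ℝ),
      x₀ ∈ Set.Ioo u v
      ∧ ContDiffOn ℝ (⊤ : ℕ∞) f (Set.Ioo u v)
      ∧ ContDiffOn ℝ (⊤ : ℕ∞) g (Set.Ioo u v)
      ∧ ContDiffOn ℝ (⊤ : ℕ∞) h (Set.Ioo u v)
      ∧ (∀ x ∈ Set.Ioo u v, deriv f x ≠ 0)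
      ∧ (∀ x ∈ Set.Ioo u v, g x ≠ 0)
      ∧ ∀ y Y : ℝ → ℝ,
          (∀ x ∈ Set.Ioo u v, DifferentiableAt ℝ y x) →
          (∀ x ∈ Set.Ioo u v, deriv y x
            = a x * y x ^ 3 + b x * y x ^ 2 + c x * y x + d x) →
          (∀ x ∈ Set.Ioo u v, DifferentiableAt ℝ Y (f x)) →
          (∀ x ∈ Set.Ioo u v, Y (f x) = g x * y x + h x) →
          ∀ x ∈ Set.Ioo u v, deriv Y (f x) = Y (f x) ^ 3 := by
  intro x₀
  -- the "integrating factor" exponent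
  have hφ1 : ContDiff ℝ (⊤ : ℕ∞) (fun x => b x ^ 2 / (3 * a x) - c x) := by
    exact ((hb.pow 2).div (contDiff_const.mul ha)
      (fun x => by simpa using ha0 x)).sub hc
  obtain ⟨G, hGsm, hG'⟩ := exists_antideriv _ hφ1
  set g : ℝ → ℝ := fun x => Real.exp (G x) with hgdef
  have hgsm : ContDiff ℝ (⊤ : ℕ∞) g := Real.contDiff_exp.comp hGsm
  have hg0 : ∀ x, g x ≠ 0 := fun x => (Real.exp_pos (G x)).ne'
  have hg' : ∀ x, HasDerivAt g (g x * (b x ^ 2 / (3 * a x) - c x)) x :=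
    fun x => (hG' x).exp
  -- f with f' = a / g²
  have hψ : ContDiff ℝ (⊤ : ℕ∞) (fun x => a x / g x ^ 2) :=
    ha.div (hgsm.pow 2) (fun x => pow_ne_zero _ (hg0 x))
  obtain ⟨f, hfsm, hf'⟩ := exists_antideriv _ hψ
  -- the shift h = g b / (3a)
  set h : ℝ → ℝ := fun x => g x * b x / (3 * a x) with hhdef
  have hhsm : ContDiff ℝ (⊤ : ℕ∞) h :=
    (hgsm.mul hb).div (contDiff_const.mul ha) (fun x => by simpa using ha0 x)
  have hax : ∀ x, HasDerivAt a (deriv a x) x :=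
    fun x => ((ha.differentiable (by simp)) x).hasDerivAt
  have hbx : ∀ x, HasDerivAt b (deriv b x) x :=
    fun x => ((hb.differentiable (by simp)) x).hasDerivAt
  have hh' : ∀ x, HasDerivAt h
      (((g x * (b x ^ 2 / (3 * a x) - c x) * b x + g x * deriv b x) * (3 * a x)
        - g x * b x * (3 * deriv a x)) / (3 * a x) ^ 2) x := by
    intro x
    exact ((hg' x).mul (hbx x)).div ((hax x).const_mul 3) (by simpa using ha0 x)
  refine ⟨x₀ - 1, x₀ + 1, f, g, h, ?_, hfsm.contDiffOn, hgsm.contDiffOn, hhsm.contDiffOn,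
    ?_, fun x _ => hg0 x, ?_⟩
  · constructor <;> linarith
  · intro x _
    rw [(hf' x).deriv]
    exact div_ne_zero (ha0 x) (pow_ne_zero _ (hg0 x))
  · intro y Y hy hy' hY hYf x hx
    have hcomp : HasDerivAt (Y ∘ f) (deriv Y (f x) * (a x / g x ^ 2)) x :=
      ((hY x hx).hasDerivAt).comp x (hf' x)
    have hev : (Y ∘ f) =ᶠ[nhds x] fun t => g t * y t + h t := by
      filter_upwards [Ioo_mem_nhds hx.1 hx.2] with t ht
      exact hYf t ht
    have hcomp2 : HasDerivAt (fun t => g t * y t + h t)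
        (deriv Y (f x) * (a x / g x ^ 2)) x := hcomp.congr_of_eventuallyEq hev.symm
    have hrhs : HasDerivAt (fun t => g t * y t + h t)
        (g x * (b x ^ 2 / (3 * a x) - c x) * y x + g x * deriv y x
          + ((g x * (b x ^ 2 / (3 * a x) - c x) * b x + g x * deriv b x) * (3 * a x)
            - g x * b x * (3 * deriv a x)) / (3 * a x) ^ 2) x :=
      ((hg' x).mul ((hy x hx).hasDerivAt)).add (hh' x)
    have hEq := hcomp2.unique hrhs
    rw [hy' x hx] at hEq
    rw [hYf x hx]
    have hhx : h x = g x * b x / (3 * a x) := rfl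
    rw [hhx]
    exact abel_key (a x) (b x) (c x) (d x) (deriv a x) (deriv b x) (g x) (y x)
      (deriv Y (f x)) (ha0 x) (hg0 x) (hs3 x) hEq
end

section
/- Let a, b, c, f, g, h : ℝ → ℝ be smooth with f' ≠ 0 and g ≠ 0 everywhere, and let A, B, C : ℝ → ℝ satisfy, for all x: A(f(x)) = a/(f'·g³), B(f(x)) = (b·g − 4a·h)/(f'·g³), C(f(x)) = (6a·h² − 3b·g·h + c·g²)/(f'·g³) (right-hand sides evaluated at x). Then for all x, (8·A·C − 3·B²)(f(x)) = (8·a(x)·c(x) − 3·b(x)²) / (f'(x)²·g(x)⁴). That is, I₁ = 8ac − 3b² is a relative invariant of the generalized Abel equation of degree 4 under linear point transformations. -/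
/-- `I₁ = 8ac − 3b²` is a relative invariant of the generalized
Abel equation of degree 4 under linear point transformations. -/
theorem abel_deg4_I1_relative_invariant
    (a b c f g h A B C : ℝ → ℝ)
    (ha : ContDiff ℝ (⊤ : ℕ∞) a) (hb : ContDiff ℝ (⊤ : ℕ∞) b)
    (hc : ContDiff ℝ (⊤ : ℕ∞) c)
    (hf : ContDiff ℝ (⊤ : ℕ∞) f) (hg : ContDiff ℝ (⊤ : ℕ∞) g)
    (hh : ContDiff ℝ (⊤ : ℕ∞) h)
    (hf' : ∀ x, deriv f x ≠ 0) (hg0 : ∀ x, g x ≠ 0)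
    (hAe : ∀ x, A (f x) = a x / (deriv f x * g x ^ 3))
    (hBe : ∀ x, B (f x) = (b x * g x - 4 * a x * h x) / (deriv f x * g x ^ 3))
    (hCe : ∀ x, C (f x) = (6 * a x * h x ^ 2 - 3 * b x * g x * h x
      + c x * g x ^ 2) / (deriv f x * g x ^ 3)) :
    ∀ x, 8 * A (f x) * C (f x) - 3 * B (f x) ^ 2
      = (8 * a x * c x - 3 * b x ^ 2) / (deriv f x ^ 2 * g x ^ 4) := by
  intro x
  rw [hAe, hBe, hCe]
  have h1 := hf' x
  have h2 := hg0 x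
  field_simp
  ring
end

section
/- Let a, b, c, d, e, f, g, h : ℝ → ℝ be smooth with f' ≠ 0 and g ≠ 0 everywhere, and let A, B, C, D, E : ℝ → ℝ be differentiable and satisfy, for all x: A(f(x)) = a/(f'·g³), B(f(x)) = (b·g − 4a·h)/(f'·g³), C(f(x)) = (6a·h² − 3b·g·h + c·g²)/(f'·g³), D(f(x)) = (−4a·h³ + 3b·g·h² − 2c·g²·h + d·g³ + g'·g²)/(f'·g³), E(f(x)) = (a·h⁴ − b·g·h³ + c·g²·h² − d·g³·h + e·g⁴ + h'·g³ − g'·g²·h)/(f'·g³). Then the quantity I₂ = 3(a·b' − a'·b) + a·c² − 3a·b·d + 12a²·e is a relative invariant of weight (f')³·g⁵: for all x, (3(A·B' − A'·B) + A·C² − 3A·B·D + 12A²·E)(f(x)) = I₂(x) / (f'(x)³·g(x)⁵). -/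
set_option maxHeartbeats 1000000


/-- `I₂ = 3(ab' − a'b) + ac² − 3abd + 12a²e` is a relative
invariant of weight `(f')³·g⁵` of the generalized Abel equation of degree 4
under linear point transformations. -/
theorem abel_deg4_I2_relative_invariant
    (a b c d e f g h A B C D E : ℝ → ℝ)
    (ha : ContDiff ℝ (⊤ : ℕ∞) a) (hb : ContDiff ℝ (⊤ : ℕ∞) b)
    (hc : ContDiff ℝ (⊤ : ℕ∞) c) (hd : ContDiff ℝ (⊤ : ℕ∞) d)
    (he : ContDiff ℝ (⊤ : ℕ∞) e)
    (hf : ContDiff ℝ (⊤ : ℕ∞) f) (hg : ContDiff ℝ (⊤ : ℕ∞) g)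
    (hh : ContDiff ℝ (⊤ : ℕ∞) h)
    (hf' : ∀ x, deriv f x ≠ 0) (hg0 : ∀ x, g x ≠ 0)
    (hA : Differentiable ℝ A) (hB : Differentiable ℝ B)
    (hC : Differentiable ℝ C) (hD : Differentiable ℝ D)
    (hE : Differentiable ℝ E)
    (hAe : ∀ x, A (f x) = a x / (deriv f x * g x ^ 3))
    (hBe : ∀ x, B (f x) = (b x * g x - 4 * a x * h x) / (deriv f x * g x ^ 3))
    (hCe : ∀ x, C (f x) = (6 * a x * h x ^ 2 - 3 * b x * g x * h x
      + c x * g x ^ 2) / (deriv f x * g x ^ 3))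
    (hDe : ∀ x, D (f x) = (-4 * a x * h x ^ 3 + 3 * b x * g x * h x ^ 2
      - 2 * c x * g x ^ 2 * h x + d x * g x ^ 3 + deriv g x * g x ^ 2)
      / (deriv f x * g x ^ 3))
    (hEe : ∀ x, E (f x) = (a x * h x ^ 4 - b x * g x * h x ^ 3
      + c x * g x ^ 2 * h x ^ 2 - d x * g x ^ 3 * h x + e x * g x ^ 4
      + deriv h x * g x ^ 3 - deriv g x * g x ^ 2 * h x)
      / (deriv f x * g x ^ 3)) :
    ∀ x, 3 * (A (f x) * deriv B (f x) - deriv A (f x) * B (f x))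
        + A (f x) * C (f x) ^ 2 - 3 * A (f x) * B (f x) * D (f x)
        + 12 * A (f x) ^ 2 * E (f x)
      = (3 * (a x * deriv b x - deriv a x * b x) + a x * c x ^ 2
          - 3 * a x * b x * d x + 12 * a x ^ 2 * e x)
        / (deriv f x ^ 3 * g x ^ 5) := by
  intro x
  have hfx := hf' x
  have hgx := hg0 x
  have hden : deriv f x * g x ^ 3 ≠ 0 := mul_ne_zero hfx (pow_ne_zero 3 hgx)
  have Ha : HasDerivAt a (deriv a x) x := (ha.differentiable (by norm_num) x).hasDerivAt
  have Hb : HasDerivAt b (deriv b x) x := (hb.differentiable (by norm_num) x).hasDerivAt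
  have Hg : HasDerivAt g (deriv g x) x := (hg.differentiable (by norm_num) x).hasDerivAt
  have Hh : HasDerivAt h (deriv h x) x := (hh.differentiable (by norm_num) x).hasDerivAt
  have Hf : HasDerivAt f (deriv f x) x := (hf.differentiable (by norm_num) x).hasDerivAt
  have Hf2 : HasDerivAt (deriv f) (deriv (deriv f) x) x :=
    (((contDiff_infty_iff_deriv.mp hf).2.differentiable (by norm_num)) x).hasDerivAt
  have Hg3 : HasDerivAt (fun x => g x ^ 3) (3 * g x ^ 2 * deriv g x) x := by
    exact (Hg.pow 3 : HasDerivAt (fun x => g x ^ 3) _ x).congr_deriv (by norm_num)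
  have HD : HasDerivAt (fun x => deriv f x * g x ^ 3)
      (deriv (deriv f) x * g x ^ 3 + deriv f x * (3 * g x ^ 2 * deriv g x)) x :=
    Hf2.mul Hg3
  have Hα : HasDerivAt (fun x => a x / (deriv f x * g x ^ 3))
      ((deriv a x * (deriv f x * g x ^ 3) - a x *
        (deriv (deriv f) x * g x ^ 3 + deriv f x * (3 * g x ^ 2 * deriv g x)))
        / (deriv f x * g x ^ 3) ^ 2) x := Ha.div HD hden
  have Hn : HasDerivAt (fun x => b x * g x - 4 * a x * h x)
      (deriv b x * g x + b x * deriv g x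
        - (4 * deriv a x * h x + 4 * a x * deriv h x)) x := by
    have := ((Hb.mul Hg).sub ((Ha.const_mul 4).mul Hh) :
      HasDerivAt (fun x => b x * g x - 4 * a x * h x) _ x)
    exact this.congr_deriv (by ring)
  have Hβ : HasDerivAt (fun x => (b x * g x - 4 * a x * h x) / (deriv f x * g x ^ 3))
      (((deriv b x * g x + b x * deriv g x
        - (4 * deriv a x * h x + 4 * a x * deriv h x)) * (deriv f x * g x ^ 3)
        - (b x * g x - 4 * a x * h x) *
        (deriv (deriv f) x * g x ^ 3 + deriv f x * (3 * g x ^ 2 * deriv g x)))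
        / (deriv f x * g x ^ 3) ^ 2) x := Hn.div HD hden
  have HAf : HasDerivAt (fun x => A (f x)) (deriv A (f x) * deriv f x) x :=
    (hA (f x)).hasDerivAt.comp x Hf
  have HBf : HasDerivAt (fun x => B (f x)) (deriv B (f x) * deriv f x) x :=
    (hB (f x)).hasDerivAt.comp x Hf
  rw [show (fun x => A (f x)) = fun x => a x / (deriv f x * g x ^ 3) from funext hAe] at HAf
  rw [show (fun x => B (f x)) = fun x => (b x * g x - 4 * a x * h x)
    / (deriv f x * g x ^ 3) from funext hBe] at HBf
  have eA : deriv A (f x) = ((deriv a x * (deriv f x * g x ^ 3) - a x *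
        (deriv (deriv f) x * g x ^ 3 + deriv f x * (3 * g x ^ 2 * deriv g x)))
        / (deriv f x * g x ^ 3) ^ 2) / deriv f x :=
    eq_div_of_mul_eq hfx (HAf.unique Hα)
  have eB : deriv B (f x) = (((deriv b x * g x + b x * deriv g x
        - (4 * deriv a x * h x + 4 * a x * deriv h x)) * (deriv f x * g x ^ 3)
        - (b x * g x - 4 * a x * h x) *
        (deriv (deriv f) x * g x ^ 3 + deriv f x * (3 * g x ^ 2 * deriv g x)))
        / (deriv f x * g x ^ 3) ^ 2) / deriv f x :=
    eq_div_of_mul_eq hfx (HBf.unique Hβ)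
  rw [hAe, hBe, hCe, hDe, hEe, eA, eB]
  field_simp
  ring
end

section
/- Let a, b, c, d, e, f, g, h : ℝ → ℝ be smooth with f' ≠ 0 and g ≠ 0 everywhere, and let A, B, C, D, E : ℝ → ℝ be differentiable and satisfy the degree-4 transformation identities A(f(x)) = a/(f'·g³), B(f(x)) = (b·g − 4a·h)/(f'·g³), C(f(x)) = (6a·h² − 3b·g·h + c·g²)/(f'·g³), D(f(x)) = (−4a·h³ + 3b·g·h² − 2c·g²·h + d·g³ + g'·g²)/(f'·g³), E(f(x)) = (a·h⁴ − b·g·h³ + c·g²·h² − d·g³·h + e·g⁴ + h'·g³ − g'·g²·h)/(f'·g³). Then the quantity I₃ = 8a·a'·(4ac − 3b²) + 24a²·b·b' − 32a³·c' − 3b⁵ + 64a³·c·d − 24a²·b²·d − 32a²·b·c² + 20a·b³·c is a relative invariant of weight (f')⁵·g¹⁰: for all x, the same expression formed from (A,B,C,D,E) evaluated at f(x) equals I₃(x) / (f'(x)⁵·g(x)¹⁰). -/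
private lemma abel4_deriv_comp_eq {F f N : ℝ → ℝ} {x n : ℝ}
    (hF : DifferentiableAt ℝ F (f x)) (hfx : DifferentiableAt ℝ f x)
    (hN : HasDerivAt N n x) (heq : ∀ y, F (f y) = N y) :
    deriv F (f x) * deriv f x = n := by
  have h1 : HasDerivAt (F ∘ f) (deriv F (f x) * deriv f x) x :=
    hF.hasDerivAt.comp x hfx.hasDerivAt
  have h2 : (F ∘ f) = N := funext heq
  rw [h2] at h1
  exact h1.unique hN

set_option maxHeartbeats 4000000 in
/-- `I₃ = 8aa'(4ac − 3b²) + 24a²bb' − 32a³c' − 3b⁵ + 64a³cd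
− 24a²b²d − 32a²bc² + 20ab³c` is a relative invariant of weight `(f')⁵·g¹⁰`
of the generalized Abel equation of degree 4. -/
theorem abel_deg4_I3_relative_invariant
    (a b c d e f g h A B C D E : ℝ → ℝ)
    (ha : ContDiff ℝ (⊤ : ℕ∞) a) (hb : ContDiff ℝ (⊤ : ℕ∞) b)
    (hc : ContDiff ℝ (⊤ : ℕ∞) c) (hd : ContDiff ℝ (⊤ : ℕ∞) d)
    (he : ContDiff ℝ (⊤ : ℕ∞) e)
    (hf : ContDiff ℝ (⊤ : ℕ∞) f) (hg : ContDiff ℝ (⊤ : ℕ∞) g)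
    (hh : ContDiff ℝ (⊤ : ℕ∞) h)
    (hf' : ∀ x, deriv f x ≠ 0) (hg0 : ∀ x, g x ≠ 0)
    (hA : Differentiable ℝ A) (hB : Differentiable ℝ B)
    (hC : Differentiable ℝ C) (hD : Differentiable ℝ D)
    (hE : Differentiable ℝ E)
    (hAe : ∀ x, A (f x) = a x / (deriv f x * g x ^ 3))
    (hBe : ∀ x, B (f x) = (b x * g x - 4 * a x * h x) / (deriv f x * g x ^ 3))
    (hCe : ∀ x, C (f x) = (6 * a x * h x ^ 2 - 3 * b x * g x * h x
      + c x * g x ^ 2) / (deriv f x * g x ^ 3))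
    (hDe : ∀ x, D (f x) = (-4 * a x * h x ^ 3 + 3 * b x * g x * h x ^ 2
      - 2 * c x * g x ^ 2 * h x + d x * g x ^ 3 + deriv g x * g x ^ 2)
      / (deriv f x * g x ^ 3))
    (hEe : ∀ x, E (f x) = (a x * h x ^ 4 - b x * g x * h x ^ 3
      + c x * g x ^ 2 * h x ^ 2 - d x * g x ^ 3 * h x + e x * g x ^ 4
      + deriv h x * g x ^ 3 - deriv g x * g x ^ 2 * h x)
      / (deriv f x * g x ^ 3)) :
    ∀ x, 8 * A (f x) * deriv A (f x)
          * (4 * A (f x) * C (f x) - 3 * B (f x) ^ 2)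
        + 24 * A (f x) ^ 2 * B (f x) * deriv B (f x)
        - 32 * A (f x) ^ 3 * deriv C (f x) - 3 * B (f x) ^ 5
        + 64 * A (f x) ^ 3 * C (f x) * D (f x)
        - 24 * A (f x) ^ 2 * B (f x) ^ 2 * D (f x)
        - 32 * A (f x) ^ 2 * B (f x) * C (f x) ^ 2
        + 20 * A (f x) * B (f x) ^ 3 * C (f x)
      = (8 * a x * deriv a x * (4 * a x * c x - 3 * b x ^ 2)
          + 24 * a x ^ 2 * b x * deriv b x - 32 * a x ^ 3 * deriv c x
          - 3 * b x ^ 5 + 64 * a x ^ 3 * c x * d x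
          - 24 * a x ^ 2 * b x ^ 2 * d x - 32 * a x ^ 2 * b x * c x ^ 2
          + 20 * a x * b x ^ 3 * c x)
        / (deriv f x ^ 5 * g x ^ 10) := by
  intro x
  have hfd : DifferentiableAt ℝ f x := (hf.differentiable (by norm_num)) x
  have hf2 : ContDiff ℝ (⊤ : ℕ∞) (deriv f) := (contDiff_infty_iff_deriv.mp hf).2
  have hpx : HasDerivAt (deriv f) (deriv (deriv f) x) x :=
    ((hf2.differentiable (by norm_num)) x).hasDerivAt
  have hgx : HasDerivAt g (deriv g x) x := ((hg.differentiable (by norm_num)) x).hasDerivAt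
  have hax : HasDerivAt a (deriv a x) x := ((ha.differentiable (by norm_num)) x).hasDerivAt
  have hbx : HasDerivAt b (deriv b x) x := ((hb.differentiable (by norm_num)) x).hasDerivAt
  have hcx : HasDerivAt c (deriv c x) x := ((hc.differentiable (by norm_num)) x).hasDerivAt
  have hhx : HasDerivAt h (deriv h x) x := ((hh.differentiable (by norm_num)) x).hasDerivAt
  have hne : deriv f x * g x ^ 3 ≠ 0 := mul_ne_zero (hf' x) (pow_ne_zero 3 (hg0 x))
  have hg3 : HasDerivAt (fun y => g y ^ 3) (3 * g x ^ 2 * deriv g x) x := by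
    have := hgx.pow 3; norm_num at this; exact this
  have hg2 : HasDerivAt (fun y => g y ^ 2) (2 * g x * deriv g x) x := by
    have := hgx.pow 2; norm_num at this; exact this
  have hh2 : HasDerivAt (fun y => h y ^ 2) (2 * h x * deriv h x) x := by
    have := hhx.pow 2; norm_num at this; exact this
  have hDen : HasDerivAt (fun y => deriv f y * g y ^ 3)
      (deriv (deriv f) x * g x ^ 3 + deriv f x * (3 * g x ^ 2 * deriv g x)) x :=
    hpx.mul hg3
  have hA1 : deriv A (f x) * deriv f x =
      (deriv a x * (deriv f x * g x ^ 3)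
        - a x * (deriv (deriv f) x * g x ^ 3 + deriv f x * (3 * g x ^ 2 * deriv g x)))
        / (deriv f x * g x ^ 3) ^ 2 :=
    abel4_deriv_comp_eq (hA (f x)) hfd (hax.div hDen hne) hAe
  have hB1 : deriv B (f x) * deriv f x =
      ((deriv b x * g x + b x * deriv g x
          - (4 * deriv a x * h x + 4 * a x * deriv h x)) * (deriv f x * g x ^ 3)
        - (b x * g x - 4 * a x * h x)
          * (deriv (deriv f) x * g x ^ 3 + deriv f x * (3 * g x ^ 2 * deriv g x)))
        / (deriv f x * g x ^ 3) ^ 2 :=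
    abel4_deriv_comp_eq (hB (f x)) hfd
      (((hbx.mul hgx).sub ((hax.const_mul 4).mul hhx)).div hDen hne) hBe
  have hC1 : deriv C (f x) * deriv f x =
      ((6 * deriv a x * h x ^ 2 + 6 * a x * (2 * h x * deriv h x)
          - ((3 * deriv b x * g x + 3 * b x * deriv g x) * h x
              + 3 * b x * g x * deriv h x)
          + (deriv c x * g x ^ 2 + c x * (2 * g x * deriv g x))) * (deriv f x * g x ^ 3)
        - (6 * a x * h x ^ 2 - 3 * b x * g x * h x + c x * g x ^ 2)
          * (deriv (deriv f) x * g x ^ 3 + deriv f x * (3 * g x ^ 2 * deriv g x)))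
        / (deriv f x * g x ^ 3) ^ 2 :=
    abel4_deriv_comp_eq (hC (f x)) hfd
      (((((hax.const_mul 6).mul hh2).sub
          ((((hbx.const_mul 3).mul hgx)).mul hhx)).add (hcx.mul hg2)).div hDen hne) hCe
  have hA2 := (eq_div_iff (hf' x)).mpr hA1
  have hB2 := (eq_div_iff (hf' x)).mpr hB1
  have hC2 := (eq_div_iff (hf' x)).mpr hC1
  rw [hAe, hBe, hCe, hDe, hA2, hB2, hC2]
  have hp : deriv f x ≠ 0 := hf' x
  have hG : g x ≠ 0 := hg0 x
  field_simp
  ring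
end

section
/- Let a, b, c, f, g, h : ℝ → ℝ be smooth with f' > 0 and g ≠ 0 everywhere, and let A, B, C : ℝ → ℝ satisfy A(f(x)) = a/(f'·g³), B(f(x)) = (b·g − 4a·h)/(f'·g³), C(f(x)) = (6a·h² − 3b·g·h + c·g²)/(f'·g³) for all x. Define I₀ = a, I₁ = 8ac − 3b², and Ĩ₀ = A, Ĩ₁ = 8AC − 3B², and assume I₁ ≠ 0 on an open interval U. Let I, Ĩ : ℝ → ℝ be differentiable with Ĩ(f(x)) = I(x) for all x ∈ U. Then for all x ∈ U, ( (Ĩ₀² / |Ĩ₁|^{3/2}) · Ĩ' )(f(x)) = ( I₀(x)² / |I₁(x)|^{3/2} ) · I'(x). That is, ∇ = (I₀²/|I₁|^{3/2})·d/dx is an invariant derivation for generalized Abel equations of degree 4. -/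
/-- `∇ = (I₀²/|I₁|^{3/2})·d/dx` (with `I₀ = a`,
`I₁ = 8ac − 3b²`) is an invariant derivation for generalized Abel equations of
degree 4. -/
theorem abel_deg4_invariant_derivation
    (a b c f g h A B C : ℝ → ℝ)
    (ha : ContDiff ℝ (⊤ : ℕ∞) a) (hb : ContDiff ℝ (⊤ : ℕ∞) b)
    (hc : ContDiff ℝ (⊤ : ℕ∞) c)
    (hf : ContDiff ℝ (⊤ : ℕ∞) f) (hg : ContDiff ℝ (⊤ : ℕ∞) g)
    (hh : ContDiff ℝ (⊤ : ℕ∞) h)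
    (hf' : ∀ x, 0 < deriv f x) (hg0 : ∀ x, g x ≠ 0)
    (hAe : ∀ x, A (f x) = a x / (deriv f x * g x ^ 3))
    (hBe : ∀ x, B (f x) = (b x * g x - 4 * a x * h x) / (deriv f x * g x ^ 3))
    (hCe : ∀ x, C (f x) = (6 * a x * h x ^ 2 - 3 * b x * g x * h x
      + c x * g x ^ 2) / (deriv f x * g x ^ 3))
    (U : Set ℝ) (hU : ∃ p q : ℝ, U = Set.Ioo p q)
    (hI1 : ∀ x ∈ U, 8 * a x * c x - 3 * b x ^ 2 ≠ 0)
    (I Itil : ℝ → ℝ) (hI : Differentiable ℝ I) (hItil : Differentiable ℝ Itil)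
    (hmatch : ∀ x ∈ U, Itil (f x) = I x) :
    ∀ x ∈ U,
      (A (f x) ^ 2 / |8 * A (f x) * C (f x) - 3 * B (f x) ^ 2| ^ ((3:ℝ)/2))
          * deriv Itil (f x)
        = (a x ^ 2 / |8 * a x * c x - 3 * b x ^ 2| ^ ((3:ℝ)/2))
          * deriv I x := by
  obtain ⟨p, q, rfl⟩ := hU
  intro x hx
  have hD : 0 < deriv f x := hf' x
  have hD0 : deriv f x ≠ 0 := ne_of_gt hD
  have hg0x : g x ≠ 0 := hg0 x
  have hI1x : 8 * a x * c x - 3 * b x ^ 2 ≠ 0 := hI1 x hx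
  set D := deriv f x with hDdef
  -- Step 1: the transformed I₁
  have key1 : 8 * A (f x) * C (f x) - 3 * B (f x) ^ 2
      = (8 * a x * c x - 3 * b x ^ 2) / (D ^ 2 * g x ^ 4) := by
    rw [hAe, hBe, hCe, ← hDdef]
    field_simp
    ring
  -- Step 2: absolute value
  have hden : (0:ℝ) < D ^ 2 * g x ^ 4 := by positivity
  have key2 : |8 * A (f x) * C (f x) - 3 * B (f x) ^ 2|
      = |8 * a x * c x - 3 * b x ^ 2| / (D ^ 2 * g x ^ 4) := by
    rw [key1, abs_div, abs_of_pos hden]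
  -- Step 3: rpow computation
  have hpow : (D ^ 2 * g x ^ 4 : ℝ) ^ ((3:ℝ)/2) = D ^ 3 * g x ^ 6 := by
    have ht : (0:ℝ) < D * g x ^ 2 := by positivity
    have h1 : (D ^ 2 * g x ^ 4 : ℝ) = (D * g x ^ 2) ^ (2:ℕ) := by ring
    rw [h1, ← Real.rpow_natCast (D * g x ^ 2) 2, ← Real.rpow_mul ht.le]
    norm_num
    ring
  have key3 : |8 * A (f x) * C (f x) - 3 * B (f x) ^ 2| ^ ((3:ℝ)/2)
      = |8 * a x * c x - 3 * b x ^ 2| ^ ((3:ℝ)/2) / (D ^ 3 * g x ^ 6) := by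
    rw [key2, Real.div_rpow (abs_nonneg _) hden.le, hpow]
  -- Step 4: chain rule
  have hfd : DifferentiableAt ℝ f x := hf.differentiable (by norm_num) x
  have hev : (Itil ∘ f) =ᶠ[nhds x] I :=
    Filter.eventuallyEq_of_mem (Ioo_mem_nhds hx.1 hx.2) (fun y hy => hmatch y hy)
  have hdI : deriv I x = deriv Itil (f x) * D := by
    rw [← hev.deriv_eq, deriv_comp x (hItil (f x)) hfd]
  -- conclude
  have hIa : (0:ℝ) < |8 * a x * c x - 3 * b x ^ 2| ^ ((3:ℝ)/2) :=
    Real.rpow_pos_of_pos (abs_pos.mpr hI1x) _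
  rw [key3, hAe, hdI, ← hDdef]
  field_simp
end

section
/- Let a, b, c, d, e : ℝ → ℝ be smooth with a(x) > 0 for all x, and suppose 8·a(x)·c(x) = 3·b(x)² for all x. Define p = a^{1/4}, q = b/(4p³), r = d − 4p·q³, s = e − q⁴. Then p, q, r, s are smooth, p > 0, and for all x ∈ ℝ and all y ∈ ℝ, a(x)·y⁴ + b(x)·y³ + c(x)·y² + d(x)·y + e(x) = (p(x)·y + q(x))⁴ + r(x)·y + s(x). That is, the generalized Abel equations of degree 4 lying in the singular class I₁ = 8ac − 3b² = 0 (with positive leading coefficient) are exactly those of the form y' = (p(x)y + q(x))⁴ + r(x)y + s(x). -/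
/-- generalized Abel equations of degree 4 in the singular class
`I₁ = 8ac − 3b² = 0` (with positive leading coefficient) are exactly those of
the form `y' = (p(x)y + q(x))⁴ + r(x)y + s(x)`, with
`p = a^{1/4}`, `q = b/(4p³)`, `r = d − 4pq³`, `s = e − q⁴`. -/
theorem abel_deg4_singular_class_form
    (a b c d e : ℝ → ℝ)
    (ha : ContDiff ℝ (⊤ : ℕ∞) a) (hb : ContDiff ℝ (⊤ : ℕ∞) b)
    (hc : ContDiff ℝ (⊤ : ℕ∞) c) (hd : ContDiff ℝ (⊤ : ℕ∞) d)
    (he : ContDiff ℝ (⊤ : ℕ∞) e)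
    (hapos : ∀ x, 0 < a x)
    (hsing : ∀ x, 8 * a x * c x = 3 * b x ^ 2)
    (p q r s : ℝ → ℝ)
    (hp : p = fun x => a x ^ ((1:ℝ)/4))
    (hq : q = fun x => b x / (4 * p x ^ 3))
    (hr : r = fun x => d x - 4 * p x * q x ^ 3)
    (hs : s = fun x => e x - q x ^ 4) :
    ContDiff ℝ (⊤ : ℕ∞) p ∧ ContDiff ℝ (⊤ : ℕ∞) q
    ∧ ContDiff ℝ (⊤ : ℕ∞) r ∧ ContDiff ℝ (⊤ : ℕ∞) s
    ∧ (∀ x, 0 < p x)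
    ∧ ∀ x y : ℝ,
        a x * y ^ 4 + b x * y ^ 3 + c x * y ^ 2 + d x * y + e x
          = (p x * y + q x) ^ 4 + r x * y + s x := by
  have hppos : ∀ x, 0 < p x := by
    intro x; rw [hp]; exact Real.rpow_pos_of_pos (hapos x) _
  have hcp : ContDiff ℝ (⊤ : ℕ∞) p := by
    rw [hp]; exact ha.rpow_const_of_ne (fun x => (hapos x).ne')
  have hp4 : ∀ x, p x ^ 4 = a x := by
    intro x
    rw [hp]
    rw [← Real.rpow_natCast (a x ^ ((1:ℝ)/4)) 4, ← Real.rpow_mul (hapos x).le]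
    norm_num
  have hcq : ContDiff ℝ (⊤ : ℕ∞) q := by
    rw [hq]
    exact hb.div (contDiff_const.mul (hcp.pow 3))
      (fun x => by have := hppos x; positivity)
  have hcr : ContDiff ℝ (⊤ : ℕ∞) r := by
    rw [hr]
    exact hd.sub ((contDiff_const.mul hcp).mul (hcq.pow 3))
  have hcs : ContDiff ℝ (⊤ : ℕ∞) s := by
    rw [hs]; exact he.sub (hcq.pow 4)
  refine ⟨hcp, hcq, hcr, hcs, hppos, fun x y => ?_⟩
  have hpx := hppos x
  have hbq : b x = 4 * p x ^ 3 * q x := by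
    rw [hq]; field_simp
  have hcx : c x = 6 * p x ^ 2 * q x ^ 2 := by
    have h := hsing x
    have ha4 := hp4 x
    have : 8 * p x ^ 4 * c x = 3 * (4 * p x ^ 3 * q x) ^ 2 := by
      rw [ha4, ← hbq]; exact h
    have h4 : (8:ℝ) * p x ^ 4 ≠ 0 := by positivity
    apply mul_left_cancel₀ h4
    calc 8 * p x ^ 4 * c x = 3 * (4 * p x ^ 3 * q x) ^ 2 := this
      _ = 8 * p x ^ 4 * (6 * p x ^ 2 * q x ^ 2) := by ring
  rw [hr, hs, ← hp4 x, hbq, hcx]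
  ring
end

section
/- Let p, q, r, s : ℝ → ℝ be smooth with p(x) ≠ 0 for all x, and suppose the relative invariant L₁ = q'·p − p'·q + p²·s − p·q·r vanishes identically. Then for every x₀ ∈ ℝ there exist an open interval V containing x₀ and smooth functions f, g, h : V → ℝ with f' ≠ 0 and g ≠ 0 on V, such that for every differentiable y : V → ℝ satisfying y'(x) = (p(x)·y(x) + q(x))⁴ + r(x)·y(x) + s(x) on V and every differentiable Y with Y(f(x)) = g(x)·y(x) + h(x) for all x ∈ V, one has Y'(f(x)) = Y(f(x))⁴ for all x ∈ V. In particular, all equations of this singular class with L₁ = 0 are locally equivalent to Y' = Y⁴. -/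
private lemma abel_deg4_key_algebra (P P' Q Q' R S Y E F : ℝ)
    (hexp : F * E ^ 4 = E)
    (hL : Q' * P - P' * Q + P ^ 2 * S - P * Q * R = 0)
    (hP : P ≠ 0) :
    (E * (-(P' / P + R)) * P + E * P') * Y
      + (E * P) * ((P * Y + Q) ^ 4 + R * Y + S)
      + (E * (-(P' / P + R)) * Q + E * Q')
    = (E * P * Y + E * Q) ^ 4 * (P * F) := by
  field_simp
  linear_combination E * hL - P ^ 2 * (P * Y + Q) ^ 4 * hexp

/-- every ODE of the singular degree-4 class
`y' = (p(x)y + q(x))⁴ + r(x)y + s(x)` whose relative invariant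
`L₁ = q'p − p'q + p²s − pqr` vanishes identically is locally equivalent, via a
linear point transformation, to `Y' = Y⁴`. -/
theorem abel_deg4_singular_L1_zero_equivalent_to_Y4
    (p q r s : ℝ → ℝ)
    (hp : ContDiff ℝ (⊤ : ℕ∞) p) (hq : ContDiff ℝ (⊤ : ℕ∞) q)
    (hr : ContDiff ℝ (⊤ : ℕ∞) r) (hs : ContDiff ℝ (⊤ : ℕ∞) s)
    (hp0 : ∀ x, p x ≠ 0)
    (hL1 : ∀ x, deriv q x * p x - deriv p x * q x
      + p x ^ 2 * s x - p x * q x * r x = 0) :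
    ∀ x₀ : ℝ, ∃ (u v : ℝ) (f g h : ℝ → ℝ),
      x₀ ∈ Set.Ioo u v
      ∧ ContDiffOn ℝ (⊤ : ℕ∞) f (Set.Ioo u v)
      ∧ ContDiffOn ℝ (⊤ : ℕ∞) g (Set.Ioo u v)
      ∧ ContDiffOn ℝ (⊤ : ℕ∞) h (Set.Ioo u v)
      ∧ (∀ x ∈ Set.Ioo u v, deriv f x ≠ 0)
      ∧ (∀ x ∈ Set.Ioo u v, g x ≠ 0)
      ∧ ∀ y Y : ℝ → ℝ,
          (∀ x ∈ Set.Ioo u v, DifferentiableAt ℝ y x) →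
          (∀ x ∈ Set.Ioo u v, deriv y x
            = (p x * y x + q x) ^ 4 + r x * y x + s x) →
          (∀ x ∈ Set.Ioo u v, DifferentiableAt ℝ Y (f x)) →
          (∀ x ∈ Set.Ioo u v, Y (f x) = g x * y x + h x) →
          ∀ x ∈ Set.Ioo u v, deriv Y (f x) = Y (f x) ^ 4 := by
  intro x₀
  -- the "logarithmic derivative" coefficient
  set A : ℝ → ℝ := fun x => deriv p x / p x + r x with hA_def
  have hp' : ContDiff ℝ (⊤ : ℕ∞) (deriv p) := (contDiff_infty_iff_deriv.mp hp).2
  have hA : ContDiff ℝ (⊤ : ℕ∞) A := (hp'.div hp hp0).add hr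
  -- B = ∫ A
  set B : ℝ → ℝ := fun x => ∫ t in x₀..x, A t with hB_def
  have hB : ∀ x, HasDerivAt B (A x) x := fun x =>
    (hA.continuous.integral_hasStrictDerivAt x₀ x).hasDerivAt
  have hB_smooth : ContDiff ℝ (⊤ : ℕ∞) B := by
    rw [contDiff_infty_iff_deriv]
    refine ⟨fun x => (hB x).differentiableAt, ?_⟩
    have : deriv B = A := funext fun x => (hB x).deriv
    rw [this]; exact hA
  -- the integrand of f
  set c : ℝ → ℝ := fun x => p x * Real.exp (3 * B x) with hc_def
  have hc : ContDiff ℝ (⊤ : ℕ∞) c :=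
    hp.mul ((contDiff_const.mul hB_smooth).exp)
  set f : ℝ → ℝ := fun x => ∫ t in x₀..x, c t with hf_def
  have hf : ∀ x, HasDerivAt f (c x) x := fun x =>
    (hc.continuous.integral_hasStrictDerivAt x₀ x).hasDerivAt
  have hf_smooth : ContDiff ℝ (⊤ : ℕ∞) f := by
    rw [contDiff_infty_iff_deriv]
    refine ⟨fun x => (hf x).differentiableAt, ?_⟩
    have : deriv f = c := funext fun x => (hf x).deriv
    rw [this]; exact hc
  set g : ℝ → ℝ := fun x => Real.exp (-B x) * p x with hg_def
  set h : ℝ → ℝ := fun x => Real.exp (-B x) * q x with hh_def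
  refine ⟨x₀ - 1, x₀ + 1, f, g, h, by constructor <;> linarith,
    hf_smooth.contDiffOn, ((hB_smooth.neg.exp).mul hp).contDiffOn,
    ((hB_smooth.neg.exp).mul hq).contDiffOn, ?_, ?_, ?_⟩
  · intro x _
    rw [(hf x).deriv]
    exact mul_ne_zero (hp0 x) (Real.exp_ne_zero _)
  · intro x _
    exact mul_ne_zero (Real.exp_ne_zero _) (hp0 x)
  · intro y Y hy hy' hY hYf x hx
    -- derivative of φ = g y + h
    have hE : HasDerivAt (fun x => Real.exp (-B x)) (Real.exp (-B x) * (-A x)) x :=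
      ((hB x).neg).exp
    have hpd : HasDerivAt p (deriv p x) x := (hp.differentiable (by simp) x).hasDerivAt
    have hqd : HasDerivAt q (deriv q x) x := (hq.differentiable (by simp) x).hasDerivAt
    have hyd : HasDerivAt y ((p x * y x + q x) ^ 4 + r x * y x + s x) x := by
      have := (hy x hx).hasDerivAt
      rwa [hy' x hx] at this
    have hφ : HasDerivAt (fun x => g x * y x + h x)
        ((Real.exp (-B x) * (-A x) * p x + Real.exp (-B x) * deriv p x) * y x
          + (Real.exp (-B x) * p x) * ((p x * y x + q x) ^ 4 + r x * y x + s x)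
          + (Real.exp (-B x) * (-A x) * q x + Real.exp (-B x) * deriv q x)) x :=
      ((hE.mul hpd).mul hyd).add (hE.mul hqd)
    -- chain rule for Y ∘ f
    have hcomp : HasDerivAt (fun x => Y (f x)) (deriv Y (f x) * c x) x :=
      ((hY x hx).hasDerivAt.comp x (hf x))
    have heq : deriv (fun x => Y (f x)) x = deriv (fun x => g x * y x + h x) x := by
      apply Filter.EventuallyEq.deriv_eq
      filter_upwards [isOpen_Ioo.mem_nhds hx] with t ht
      exact hYf t ht
    have hder : deriv Y (f x) * c x
        = (Real.exp (-B x) * (-A x) * p x + Real.exp (-B x) * deriv p x) * y x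
          + (Real.exp (-B x) * p x) * ((p x * y x + q x) ^ 4 + r x * y x + s x)
          + (Real.exp (-B x) * (-A x) * q x + Real.exp (-B x) * deriv q x) := by
      rw [← hcomp.deriv, heq, hφ.deriv]
    have hc0 : c x ≠ 0 := mul_ne_zero (hp0 x) (Real.exp_ne_zero _)
    have hYval : Y (f x) = Real.exp (-B x) * p x * y x + Real.exp (-B x) * q x :=
      hYf x hx
    -- the key exponential identity
    have hexp : Real.exp (3 * B x) * Real.exp (-B x) ^ 4 = Real.exp (-B x) := by
      rw [← Real.exp_nat_mul, ← Real.exp_add]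
      ring_nf
    -- goal : deriv Y (f x) = Y (f x) ^ 4
    have key : deriv Y (f x) * c x = Y (f x) ^ 4 * c x := by
      rw [hder, hYval]
      exact abel_deg4_key_algebra (p x) (deriv p x) (q x) (deriv q x) (r x) (s x)
        (y x) (Real.exp (-B x)) (Real.exp (3 * B x)) hexp (hL1 x) (hp0 x)
    have := mul_right_cancel₀ hc0 key
    exact this
end

section
/- Let a, b, c, d, f, g, h : ℝ → ℝ be smooth with f' ≠ 0 and g ≠ 0 everywhere, and let A, B, C, D : ℝ → ℝ satisfy, for all x: A(f(x)) = a/(f'·g⁴), B(f(x)) = (b·g − 5a·h)/(f'·g⁴), C(f(x)) = (10a·h² − 4b·g·h + c·g²)/(f'·g⁴), D(f(x)) = (−10a·h³ + 6b·g·h² − 3c·g²·h + d·g³)/(f'·g⁴) (right-hand sides evaluated at x). Then for all x: (5·A·C − 2·B²)(f(x)) = (5ac − 2b²)(x) / (f'(x)²·g(x)⁶) and (4·B³ − 15·A·B·C + 25·A²·D)(f(x)) = (4b³ − 15abc + 25a²d)(x) / (f'(x)³·g(x)⁹). Consequently, at every x with K₁ = 5ac − 2b² nonzero, the quotient K₂²/K₁³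 (with K₂ = 4b³ − 15abc + 25a²d) computed from (A,B,C,D) at f(x) equals K₂²/K₁³ computed from (a,b,c,d) at x; i.e., K₁ and K₂ are relative invariants of the generalized Abel equation of degree 5, and J₀ = K₂²/K₁³ is an absolute invariant. -/
/-- `K₁ = 5ac − 2b²` and `K₂ = 4b³ − 15abc + 25a²d` are relative
invariants (of weights `(f')²g⁶` and `(f')³g⁹`) of the generalized Abel
equation of degree 5 under linear point transformations, and `J₀ = K₂²/K₁³` is
an absolute invariant. -/
theorem abel_deg5_K1_K2_relative_invariants
    (a b c d f g h A B C D : ℝ → ℝ)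
    (ha : ContDiff ℝ (⊤ : ℕ∞) a) (hb : ContDiff ℝ (⊤ : ℕ∞) b)
    (hc : ContDiff ℝ (⊤ : ℕ∞) c) (hd : ContDiff ℝ (⊤ : ℕ∞) d)
    (hf : ContDiff ℝ (⊤ : ℕ∞) f) (hg : ContDiff ℝ (⊤ : ℕ∞) g)
    (hh : ContDiff ℝ (⊤ : ℕ∞) h)
    (hf' : ∀ x, deriv f x ≠ 0) (hg0 : ∀ x, g x ≠ 0)
    (hAe : ∀ x, A (f x) = a x / (deriv f x * g x ^ 4))
    (hBe : ∀ x, B (f x) = (b x * g x - 5 * a x * h x) / (deriv f x * g x ^ 4))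
    (hCe : ∀ x, C (f x) = (10 * a x * h x ^ 2 - 4 * b x * g x * h x
      + c x * g x ^ 2) / (deriv f x * g x ^ 4))
    (hDe : ∀ x, D (f x) = (-10 * a x * h x ^ 3 + 6 * b x * g x * h x ^ 2
      - 3 * c x * g x ^ 2 * h x + d x * g x ^ 3) / (deriv f x * g x ^ 4)) :
    (∀ x, 5 * A (f x) * C (f x) - 2 * B (f x) ^ 2
      = (5 * a x * c x - 2 * b x ^ 2) / (deriv f x ^ 2 * g x ^ 6))
    ∧ (∀ x, 4 * B (f x) ^ 3 - 15 * A (f x) * B (f x) * C (f x)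
        + 25 * A (f x) ^ 2 * D (f x)
      = (4 * b x ^ 3 - 15 * a x * b x * c x + 25 * a x ^ 2 * d x)
        / (deriv f x ^ 3 * g x ^ 9))
    ∧ (∀ x, 5 * a x * c x - 2 * b x ^ 2 ≠ 0 →
        (4 * B (f x) ^ 3 - 15 * A (f x) * B (f x) * C (f x)
          + 25 * A (f x) ^ 2 * D (f x)) ^ 2
          / (5 * A (f x) * C (f x) - 2 * B (f x) ^ 2) ^ 3
        = (4 * b x ^ 3 - 15 * a x * b x * c x + 25 * a x ^ 2 * d x) ^ 2
          / (5 * a x * c x - 2 * b x ^ 2) ^ 3) := by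

  have key1 : ∀ x, 5 * A (f x) * C (f x) - 2 * B (f x) ^ 2
      = (5 * a x * c x - 2 * b x ^ 2) / (deriv f x ^ 2 * g x ^ 6) := by
    intro x
    have hf0 := hf' x; have hg := hg0 x
    rw [hAe, hBe, hCe]
    field_simp
    ring
  have key2 : ∀ x, 4 * B (f x) ^ 3 - 15 * A (f x) * B (f x) * C (f x)
        + 25 * A (f x) ^ 2 * D (f x)
      = (4 * b x ^ 3 - 15 * a x * b x * c x + 25 * a x ^ 2 * d x)
        / (deriv f x ^ 3 * g x ^ 9) := by
    intro x
    have hf0 := hf' x; have hg := hg0 x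
    rw [hAe, hBe, hCe, hDe]
    field_simp
    ring
  refine ⟨key1, key2, fun x hK1 => ?_⟩
  have hf0 := hf' x; have hg := hg0 x
  rw [key1, key2, div_pow, div_pow, div_div_div_eq]
  rw [show (deriv f x ^ 3 * g x ^ 9) ^ 2 = (deriv f x ^ 2 * g x ^ 6) ^ 3 by ring,
    mul_comm ((4 * b x ^ 3 - 15 * a x * b x * c x + 25 * a x ^ 2 * d x) ^ 2)]
  exact mul_div_mul_left _ _ (by positivity)
end

section
/- Let a, b, c, d, e, f₀ : ℝ → ℝ be smooth with a(x) ≠ 0 for all x, and suppose 5·a(x)·c(x) = 2·b(x)² for all x. Define p = a^{1/5} (the real fifth root, which is smooth and nonvanishing since a ≠ 0), q = b/(5p⁴), r = d − 10p²·q³, s = e − 5p·q⁴, t = f₀ − q⁵. Then p, q, r, s, t are smooth and for all x ∈ ℝ and all y ∈ ℝ, a(x)·y⁵ + b(x)·y⁴ + c(x)·y³ + d(x)·y² + e(x)·y + f₀(x) = (p(x)·y + q(x))⁵ + r(x)·y² + s(x)·y + t(x). Moreover, r(x) = 0 if and only if K₂(x) = 4b(x)³ − 15a(x)b(x)c(x)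 + 25a(x)²d(x) = 0; hence the equations in the second singular class K₁ = K₂ = 0 are exactly those of the form y' = (p(x)y + q(x))⁵ + s(x)y + t(x). -/
lemma const_sign_of_ne_zero {a : ℝ → ℝ} (hcont : Continuous a)
    (h0 : ∀ x, a x ≠ 0) : (∀ x, 0 < a x) ∨ (∀ x, a x < 0) := by
  by_cases h : 0 < a 0
  · left
    intro x
    by_contra hx
    push_neg at hx
    have hx' : a x < 0 := lt_of_le_of_ne hx (h0 x)
    have : (0:ℝ) ∈ Set.uIcc (a x) (a 0) := Set.mem_uIcc.2 (Or.inl ⟨hx'.le, h.le⟩)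
    obtain ⟨z, _, hz⟩ := intermediate_value_uIcc (hcont.continuousOn) this
    exact h0 z hz
  · right
    intro x
    by_contra hx
    push_neg at hx
    have h0' : a 0 < 0 := lt_of_le_of_ne (not_lt.1 h) (h0 0)
    have hx' : 0 < a x := lt_of_le_of_ne hx (Ne.symm (h0 x))
    have : (0:ℝ) ∈ Set.uIcc (a 0) (a x) := Set.mem_uIcc.2 (Or.inl ⟨h0'.le, hx'.le⟩)
    obtain ⟨z, _, hz⟩ := intermediate_value_uIcc (hcont.continuousOn) this
    exact h0 z hz

/-- generalized Abel equations of degree 5 with `5ac = 2b²` can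
be written as `y' = (p(x)y + q(x))⁵ + r(x)y² + s(x)y + t(x)` with
`p = a^{1/5}` (real fifth root), `q = b/(5p⁴)`, `r = d − 10p²q³`,
`s = e − 5pq⁴`, `t = f₀ − q⁵`; moreover `r = 0 ↔ K₂ = 0`, so the second
singular class `K₁ = K₂ = 0` consists exactly of the equations
`y' = (p(x)y + q(x))⁵ + s(x)y + t(x)`. -/
theorem abel_deg5_singular_class_form
    (a b c d e f₀ : ℝ → ℝ)
    (ha : ContDiff ℝ (⊤ : ℕ∞) a) (hb : ContDiff ℝ (⊤ : ℕ∞) b)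
    (hc : ContDiff ℝ (⊤ : ℕ∞) c) (hd : ContDiff ℝ (⊤ : ℕ∞) d)
    (he : ContDiff ℝ (⊤ : ℕ∞) e) (hf₀ : ContDiff ℝ (⊤ : ℕ∞) f₀)
    (ha0 : ∀ x, a x ≠ 0)
    (hsing : ∀ x, 5 * a x * c x = 2 * b x ^ 2)
    (p q r s t : ℝ → ℝ)
    (hp : p = fun x => if a x < 0 then -((-(a x)) ^ ((1:ℝ)/5))
      else a x ^ ((1:ℝ)/5))
    (hq : q = fun x => b x / (5 * p x ^ 4))
    (hr : r = fun x => d x - 10 * p x ^ 2 * q x ^ 3)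
    (hs : s = fun x => e x - 5 * p x * q x ^ 4)
    (ht : t = fun x => f₀ x - q x ^ 5) :
    ContDiff ℝ (⊤ : ℕ∞) p ∧ ContDiff ℝ (⊤ : ℕ∞) q
    ∧ ContDiff ℝ (⊤ : ℕ∞) r ∧ ContDiff ℝ (⊤ : ℕ∞) s
    ∧ ContDiff ℝ (⊤ : ℕ∞) t
    ∧ (∀ x y : ℝ,
        a x * y ^ 5 + b x * y ^ 4 + c x * y ^ 3 + d x * y ^ 2 + e x * y + f₀ x
          = (p x * y + q x) ^ 5 + r x * y ^ 2 + s x * y + t x)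
    ∧ (∀ x, r x = 0
        ↔ 4 * b x ^ 3 - 15 * a x * b x * c x + 25 * a x ^ 2 * d x = 0) := by
  have hsign := const_sign_of_ne_zero ha.continuous ha0
  -- key: p x ^ 5 = a x, and p is smooth
  have rpow5 : ∀ u : ℝ, 0 < u → (u ^ ((1:ℝ)/5)) ^ 5 = u := by
    intro u hu
    rw [← Real.rpow_natCast (u ^ ((1:ℝ)/5)) 5, ← Real.rpow_mul hu.le]
    norm_num
  have hp5 : ∀ x, p x ^ 5 = a x := by
    intro x
    rcases hsign with hpos | hneg
    · have := hpos x
      rw [hp]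
      simp only [if_neg (not_lt.2 this.le)]
      exact rpow5 _ this
    · have hx := hneg x
      rw [hp]
      simp only [if_pos hx]
      rw [show (-((-(a x)) ^ ((1:ℝ)/5))) ^ 5 = -(((-(a x)) ^ ((1:ℝ)/5)) ^ 5) by ring,
        rpow5 _ (by linarith)]
      ring
  have hpne : ∀ x, p x ≠ 0 := by
    intro x hx
    apply ha0 x
    rw [← hp5 x, hx]
    ring
  have hpsmooth : ContDiff ℝ (⊤ : ℕ∞) p := by
    rcases hsign with hpos | hneg
    · have : p = fun x => a x ^ ((1:ℝ)/5) := by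
        rw [hp]; funext x; simp [not_lt.2 (hpos x).le]
      rw [this]
      rw [contDiff_iff_contDiffAt]
      intro x
      exact ha.contDiffAt.rpow_const_of_ne (ne_of_gt (hpos x))
    · have : p = fun x => -((-(a x)) ^ ((1:ℝ)/5)) := by
        rw [hp]; funext x; simp [hneg x]
      rw [this]
      rw [contDiff_iff_contDiffAt]
      intro x
      exact ((ha.neg.contDiffAt).rpow_const_of_ne (by have := hneg x; intro h; linarith [neg_pos.2 this, h])).neg
  have hqsmooth : ContDiff ℝ (⊤ : ℕ∞) q := by
    rw [hq]
    exact hb.div ((contDiff_const.mul (hpsmooth.pow 4)))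
      (fun x => by have := hpne x; positivity)
  have hrsmooth : ContDiff ℝ (⊤ : ℕ∞) r := by
    rw [hr]
    exact hd.sub ((contDiff_const.mul (hpsmooth.pow 2)).mul (hqsmooth.pow 3))
  have hssmooth : ContDiff ℝ (⊤ : ℕ∞) s := by
    rw [hs]
    exact he.sub ((contDiff_const.mul hpsmooth).mul (hqsmooth.pow 4))
  have htsmooth : ContDiff ℝ (⊤ : ℕ∞) t := by
    rw [ht]
    exact hf₀.sub (hqsmooth.pow 5)
  -- pointwise coefficient relations
  have hb' : ∀ x, b x = 5 * p x ^ 4 * q x := by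
    intro x
    rw [hq]
    have := hpne x
    field_simp
  have hc' : ∀ x, c x = 10 * p x ^ 3 * q x ^ 2 := by
    intro x
    have h := hsing x
    rw [← hp5 x, hb' x] at h
    have h5 : (5:ℝ) * p x ^ 5 ≠ 0 := by have := hpne x; positivity
    apply mul_left_cancel₀ h5
    linear_combination h
  refine ⟨hpsmooth, hqsmooth, hrsmooth, hssmooth, htsmooth, ?_, ?_⟩
  · intro x y
    rw [hr, hs, ht]
    simp only
    rw [← hp5 x, hb' x, hc' x]
    ring
  · intro x
    have key : 4 * b x ^ 3 - 15 * a x * b x * c x + 25 * a x ^ 2 * d x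
        = 25 * a x ^ 2 * r x := by
      rw [← hp5 x, hb' x, hc' x, hr]
      ring
    rw [key]
    constructor
    · intro h; rw [h]; ring
    · intro h
      have h25 : (25:ℝ) * a x ^ 2 ≠ 0 := by have := ha0 x; positivity
      exact (mul_eq_zero.1 h).resolve_left h25
end
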